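/- arXiv:2506.01871 — 5 statements merged into one kernel-verified Lean document; each statement's English description precedes it below -/
import Mathlib

section
/- Let σ ≥ 1 be a real number. For all complex numbers z₀, z₁, setting z_* = z₁ − z₀ and z_θ = z₀ + θ·z_* for θ ∈ [0,1], one has the exact Taylor-type expansion: |z₁|^{2σ} z₁ = |z₀|^{2σ} z₀ + (σ+1) |z₀|^{2σ} z_* + σ |z₀|^{2σ−2} z₀² · conj(z_*) + (σ+1) z_* ∫₀¹ (|z_θ|^{2σ} − |z₀|^{2σ}) dθ + σ · conj(z_*) ∫₀¹ (|z_θ|^{2σ−2} z_θ² − |z₀|^{2σ−2} z₀²) dθ. -/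
open MeasureTheory Complex

lemma rpow_sub_one_mul {t σ : ℝ} (ht : 0 ≤ t) (hσ : 0 < σ) : t ^ (σ - 1) * t = t ^ σ := by
  rcases eq_or_lt_of_le ht with h | h
  · rw [← h, Real.zero_rpow hσ.ne', mul_zero]
  · rw [← Real.rpow_add_one h.ne', sub_add_cancel]

-- Key derivative lemma
lemma key_deriv (σ : ℝ) (hσ : 1 ≤ σ) (z₀ w : ℂ) (θ : ℝ) :
    HasDerivAt (fun θ : ℝ => ((Complex.normSq (z₀ + θ*w) ^ σ : ℝ) : ℂ) * (z₀ + θ*w))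
      ((σ+1) * ((Complex.normSq (z₀+θ*w) ^ σ : ℝ) : ℂ) * w
        + σ * ((Complex.normSq (z₀+θ*w) ^ (σ-1) : ℝ) : ℂ) * (z₀+θ*w)^2 * (starRingEnd ℂ) w) θ := by
  have hNeq : ∀ t : ℝ, Complex.normSq (z₀ + t*w)
      = Complex.normSq z₀ + (2*(z₀ * (starRingEnd ℂ) w).re) * t + Complex.normSq w * t^2 := by
    intro t
    simp [Complex.normSq_apply, Complex.add_re, Complex.add_im, Complex.mul_re, Complex.mul_im]
    ring
  set N : ℝ → ℝ := fun t => Complex.normSq (z₀ + t*w) with hN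
  have hNderiv : HasDerivAt N (2*(z₀ * (starRingEnd ℂ) w).re + Complex.normSq w * (2*θ)) θ := by
    rw [show N = fun t => Complex.normSq z₀ + (2*(z₀ * (starRingEnd ℂ) w).re) * t + Complex.normSq w * t^2 from funext hNeq]
    have h1 : HasDerivAt (fun t : ℝ => Complex.normSq z₀ + (2*(z₀ * (starRingEnd ℂ) w).re) * t) (2*(z₀ * (starRingEnd ℂ) w).re) θ :=
      by simpa using ((hasDerivAt_id θ).const_mul (2*(z₀ * (starRingEnd ℂ) w).re)).const_add (Complex.normSq z₀)
    have h2 : HasDerivAt (fun t : ℝ => Complex.normSq w * t^2) (Complex.normSq w * (2*θ)) θ := by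
      simpa using ((hasDerivAt_pow 2 θ).const_mul (Complex.normSq w))
    exact h1.add h2
  have hrpow : HasDerivAt (fun t : ℝ => N t ^ σ)
      ((2*(z₀ * (starRingEnd ℂ) w).re + Complex.normSq w * (2*θ)) * σ * N θ ^ (σ-1)) θ :=
    hNderiv.rpow_const (Or.inr hσ)
  have hz : HasDerivAt (fun t : ℝ => z₀ + (t:ℂ)*w) w θ := by
    simpa using ((ofRealCLM.hasDerivAt (x := θ)).smul_const w).const_add z₀
  have hmul : HasDerivAt (fun t : ℝ => ((N t ^ σ : ℝ) : ℂ) * (z₀ + (t:ℂ)*w)) _ θ := (hrpow.ofReal_comp).mul hz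
  convert hmul using 1
  have hc : ((2*(z₀ * (starRingEnd ℂ) w).re + Complex.normSq w * (2*θ) : ℝ) : ℂ)
      = (z₀+θ*w) * (starRingEnd ℂ) w + (starRingEnd ℂ) (z₀+θ*w) * w := by
    push_cast
    rw [Complex.re_eq_add_conj (z₀ * (starRingEnd ℂ) w)]
    rw [Complex.normSq_eq_conj_mul_self]
    simp [map_mul, Complex.conj_conj]
    ring
  push_cast at hc ⊢
  rw [hc]
  simp only [hN]
  have hcz : (starRingEnd ℂ) (z₀+↑θ*w) * (z₀+↑θ*w) = ((Complex.normSq (z₀+↑θ*w) : ℝ):ℂ) :=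
    (Complex.normSq_eq_conj_mul_self).symm
  have hNN : ((Complex.normSq (z₀+↑θ*w) ^ (σ-1) : ℝ):ℂ) * ((Complex.normSq (z₀+↑θ*w) : ℝ):ℂ)
      = ((Complex.normSq (z₀+↑θ*w) ^ σ : ℝ):ℂ) := by
    rw [← Complex.ofReal_mul, rpow_sub_one_mul (Complex.normSq_nonneg _) (lt_of_lt_of_le one_pos hσ)]
  linear_combination (-(σ:ℂ) * ((Complex.normSq (z₀+↑θ*w) ^ (σ-1) : ℝ):ℂ) * w) * hcz - (σ:ℂ)*w*hNN

lemma abs_rpow_eq (σ : ℝ) (z : ℂ) : (‖z‖ ^ (2*σ) : ℝ) = Complex.normSq z ^ σ := by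
  rw [show (2*σ) = (2:ℕ)*σ by norm_num, Real.rpow_natCast_mul (norm_nonneg z),
    Complex.sq_norm]

lemma abs_rpow_eq' (σ : ℝ) (z : ℂ) : (‖z‖ ^ (2*σ-2) : ℝ) = Complex.normSq z ^ (σ-1) := by
  rw [show (2*σ-2) = (2:ℕ)*(σ-1) by ring, Real.rpow_natCast_mul (norm_nonneg z),
    Complex.sq_norm]

/-- Taylor-type expansion of `|z₁|^{2σ} z₁` around `z₀`. -/
theorem taylor_expansion_cubic_power
    (σ : ℝ) (hσ : 1 ≤ σ) (z₀ z₁ : ℂ) :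
    (↑(‖z₁‖ ^ (2*σ)) : ℂ) * z₁ =
      (↑(‖z₀‖ ^ (2*σ)) : ℂ) * z₀
      + (↑(σ+1) : ℂ) * (↑(‖z₀‖ ^ (2*σ)) : ℂ) * (z₁ - z₀)
      + (↑σ : ℂ) * (↑(‖z₀‖ ^ (2*σ-2)) : ℂ) * z₀^2 * (starRingEnd ℂ) (z₁ - z₀)
      + (↑(σ+1) : ℂ) * (z₁ - z₀) *
          (∫ θ in (0:ℝ)..1,
            ((↑(‖z₀ + ↑θ * (z₁ - z₀)‖ ^ (2*σ)) : ℂ)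
              - (↑(‖z₀‖ ^ (2*σ)) : ℂ)))
      + (↑σ : ℂ) * (starRingEnd ℂ) (z₁ - z₀) *
          (∫ θ in (0:ℝ)..1,
            ((↑(‖z₀ + ↑θ * (z₁ - z₀)‖ ^ (2*σ-2)) : ℂ) * (z₀ + ↑θ * (z₁ - z₀))^2
              - (↑(‖z₀‖ ^ (2*σ-2)) : ℂ) * z₀^2)) := by
  have hσ0 : (0:ℝ) < σ := lt_of_lt_of_le one_pos hσ
  simp only [abs_rpow_eq, abs_rpow_eq']
  set w := z₁ - z₀ with hw
  set G : ℝ → ℂ := fun θ => ((Complex.normSq (z₀ + θ*w) ^ σ : ℝ) : ℂ) with hG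
  set H : ℝ → ℂ := fun θ => ((Complex.normSq (z₀ + θ*w) ^ (σ-1) : ℝ) : ℂ) * (z₀ + θ*w)^2 with hH
  have hNcont : Continuous (fun θ : ℝ => Complex.normSq (z₀ + θ*w)) := by
    continuity
  have hGcont : Continuous G := by
    exact Complex.continuous_ofReal.comp (hNcont.rpow_const (fun x => Or.inr hσ0.le))
  have hHcont : Continuous H := by
    apply Continuous.mul
    · exact Complex.continuous_ofReal.comp
        (hNcont.rpow_const (fun x => Or.inr (by linarith)))
    · continuity
  have hGi : IntervalIntegrable G volume 0 1 := hGcont.intervalIntegrable 0 1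
  have hHi : IntervalIntegrable H volume 0 1 := hHcont.intervalIntegrable 0 1
  -- FTC
  have hderiv : ∀ θ ∈ Set.uIcc (0:ℝ) 1,
      HasDerivAt (fun θ : ℝ => ((Complex.normSq (z₀ + θ*w) ^ σ : ℝ) : ℂ) * (z₀ + θ*w))
        (((σ:ℂ)+1) * w * G θ + (σ:ℂ) * (starRingEnd ℂ) w * H θ) θ := by
    intro θ _
    convert key_deriv σ hσ z₀ w θ using 1
    simp only [hG, hH]
    push_cast
    ring
  have hFTC := intervalIntegral.integral_eq_sub_of_hasDerivAt hderiv
    (((continuous_const.mul hGcont).add (continuous_const.mul hHcont)).intervalIntegrable 0 1)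
  rw [intervalIntegral.integral_add ((hGi.const_mul _)) ((hHi.const_mul _)),
    intervalIntegral.integral_const_mul, intervalIntegral.integral_const_mul] at hFTC
  have hi1 : (∫ θ in (0:ℝ)..1, (((Complex.normSq (z₀ + ↑θ*w) ^ σ : ℝ):ℂ) - ((Complex.normSq z₀ ^ σ : ℝ):ℂ)))
      = (∫ θ in (0:ℝ)..1, G θ) - ((Complex.normSq z₀ ^ σ : ℝ):ℂ) := by
    rw [intervalIntegral.integral_sub hGi intervalIntegrable_const,
      intervalIntegral.integral_const]
    simp
  have hi2 : (∫ θ in (0:ℝ)..1, (((Complex.normSq (z₀ + ↑θ*w) ^ (σ-1) : ℝ):ℂ) * (z₀ + ↑θ*w)^2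
        - ((Complex.normSq z₀ ^ (σ-1) : ℝ):ℂ) * z₀^2))
      = (∫ θ in (0:ℝ)..1, H θ) - ((Complex.normSq z₀ ^ (σ-1) : ℝ):ℂ) * z₀^2 := by
    rw [intervalIntegral.integral_sub hHi intervalIntegrable_const,
      intervalIntegral.integral_const]
    simp
  have h0 : z₀ + ((0:ℝ):ℂ)*w = z₀ := by norm_num
  have h1 : z₀ + ((1:ℝ):ℂ)*w = z₁ := by rw [hw]; push_cast; ring
  simp only [h0, h1] at hFTC
  rw [hi1, hi2]
  push_cast
  simp only [hw] at hFTC ⊢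
  linear_combination -hFTC
end

section
/- Let σ ≥ 1 be a real number. There exists a constant C > 0, depending only on σ, such that for all complex numbers z₀, z_* and all θ ∈ [0,1], with z_θ = z₀ + θ·z_*: | |z_θ|^{2σ} − |z₀|^{2σ} | + | |z_θ|^{2σ−2} z_θ² − |z₀|^{2σ−2} z₀² | ≤ C ( |z_*|^{2σ} + |z₀|^{2σ−1} |z_*| ). -/
open Complex

private lemma mvt_rpow {p u v x y : ℝ} (hp : 0 ≤ p) (hu : 0 < u)
    (hx : x ∈ Set.Icc u v) (hy : y ∈ Set.Icc u v) :
    |x ^ p - y ^ p| ≤ p * (u ^ (p - 1) + v ^ (p - 1)) * |x - y| := by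
  have hderiv : ∀ t ∈ Set.Icc u v, HasDerivWithinAt (fun s : ℝ => s ^ p)
      ((fun t => p * t ^ (p - 1)) t) (Set.Icc u v) t := fun t ht =>
    (Real.hasDerivAt_rpow_const (Or.inl (ne_of_gt (lt_of_lt_of_le hu ht.1)))).hasDerivWithinAt
  have hbound : ∀ t ∈ Set.Icc u v, ‖(fun t => p * t ^ (p - 1)) t‖ ≤ p * (u ^ (p-1) + v ^ (p-1)) := by
    intro t ht
    have htpos : 0 < t := lt_of_lt_of_le hu ht.1
    simp only [Real.norm_eq_abs, abs_mul, _root_.abs_of_nonneg hp,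
      _root_.abs_of_nonneg (Real.rpow_nonneg htpos.le _)]
    apply mul_le_mul_of_nonneg_left _ hp
    rcases le_or_gt 1 p with h1 | h1
    · have h2 : t ^ (p-1) ≤ v ^ (p-1) := Real.rpow_le_rpow htpos.le ht.2 (by linarith)
      have hu' : 0 ≤ u ^ (p-1) := Real.rpow_nonneg hu.le _
      linarith
    · have h2 : t ^ (p-1) ≤ u ^ (p-1) := Real.rpow_le_rpow_of_nonpos hu ht.1 (by linarith)
      have hv' : 0 ≤ v ^ (p-1) := Real.rpow_nonneg (hu.le.trans (hx.1.trans hx.2)) _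
      linarith
  have := (convex_Icc u v).norm_image_sub_le_of_norm_hasDerivWithin_le hderiv hbound hy hx
  simpa [Real.norm_eq_abs] using this

private lemma rpow_mul_sq_pos {x : ℝ} (hx : 0 < x) (s : ℝ) : x ^ s * x ^ 2 = x ^ (s + 2) := by
  rw [← Real.rpow_natCast x 2, ← Real.rpow_add hx]
  norm_num

private lemma rpow_mul_sq {x : ℝ} (hx : 0 ≤ x) {s : ℝ} (hs : 0 ≤ s) :
    x ^ s * x ^ 2 = x ^ (s + 2) := by
  rcases eq_or_lt_of_le hx with h | h
  · rw [← h, Real.zero_rpow (by linarith : s + (2:ℝ) ≠ 0)]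
    simp
  · exact rpow_mul_sq_pos h s

private lemma rpow_mul_self_pos {x : ℝ} (hx : 0 < x) (s : ℝ) : x ^ s * x = x ^ (s + 1) := by
  nth_rewrite 2 [← Real.rpow_one x]
  rw [← Real.rpow_add hx]

private lemma half_bound {σ a q : ℝ} (hσ : 1 ≤ σ) (ha : 0 < a) (hq1 : -1 ≤ q) (hq2 : q ≤ 2*σ) :
    (a/2) ^ q + (3*a/2) ^ q ≤ (2 + 2 ^ (2*σ)) * a ^ q := by
  have haq : 0 ≤ a ^ q := Real.rpow_nonneg ha.le _
  have h1 : (a/2 : ℝ) ^ q = a ^ q * (1/2 : ℝ) ^ q := by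
    rw [← Real.mul_rpow ha.le (by norm_num : (0:ℝ) ≤ 1/2)]
    ring_nf
  have h2 : (3*a/2 : ℝ) ^ q = a ^ q * (3/2 : ℝ) ^ q := by
    rw [← Real.mul_rpow ha.le (by norm_num)]; ring_nf
  have h3 : (1/2 : ℝ) ^ q ≤ 2 := by
    have : (1/2 : ℝ) ^ q ≤ (1/2 : ℝ) ^ (-1 : ℝ) :=
      Real.rpow_le_rpow_of_exponent_ge (by norm_num) (by norm_num) hq1
    rw [Real.rpow_neg_one] at this
    rw [one_div]
    linarith
  have h4 : (3/2 : ℝ) ^ q ≤ 2 ^ (2*σ) := by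
    rcases le_or_gt 0 q with hq | hq
    · calc (3/2 : ℝ) ^ q ≤ 2 ^ q := Real.rpow_le_rpow (by norm_num) (by norm_num) hq
        _ ≤ 2 ^ (2*σ) := Real.rpow_le_rpow_of_exponent_le one_le_two hq2
    · calc (3/2 : ℝ) ^ q ≤ 1 := Real.rpow_le_one_of_one_le_of_nonpos (by norm_num) hq.le
        _ ≤ 2 ^ (2*σ) := by
            rw [show (1:ℝ) = 2 ^ (0:ℝ) by simp]
            exact Real.rpow_le_rpow_of_exponent_le one_le_two (by linarith)
  rw [h1, h2]
  nlinarith [mul_le_mul_of_nonneg_left h3 haq, mul_le_mul_of_nonneg_left h4 haq]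

private lemma final_arith {σ M u v P Q : ℝ} (hσ : 1 ≤ σ) (hM : 0 < M)
    (hu : 0 ≤ u) (hv : 0 ≤ v) (hP : 0 ≤ P) (hQ : 0 ≤ Q) :
    2*σ*M*v + (9/4*(2*σ-2)*M + 5/2)*v ≤ (2*(P+Q) + 7*σ*M + 3) * (u + v) := by
  have hσ0 : (0:ℝ) ≤ σ := by linarith
  nlinarith [mul_nonneg hP hu, mul_nonneg hQ hu, mul_nonneg hP hv, mul_nonneg hQ hv,
    mul_nonneg (mul_nonneg hσ0 hM.le) hu, mul_nonneg (mul_nonneg hσ0 hM.le) hv,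
    mul_nonneg hM.le hv, hu, hv]

set_option maxHeartbeats 2000000 in
/-- bound for the differences `|z_θ|^{2σ} − |z₀|^{2σ}` and
`|z_θ|^{2σ−2} z_θ² − |z₀|^{2σ−2} z₀²` along the segment `z_θ = z₀ + θ z_*`. -/
theorem segment_difference_bound (σ : ℝ) (hσ : 1 ≤ σ) :
    ∃ C > 0, ∀ (z₀ zs : ℂ) (θ : ℝ), θ ∈ Set.Icc (0:ℝ) 1 →
      |‖z₀ + ↑θ * zs‖ ^ (2*σ) - ‖z₀‖ ^ (2*σ)|
      + ‖(↑(‖z₀ + ↑θ * zs‖ ^ (2*σ-2)) : ℂ) * (z₀ + ↑θ * zs)^2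
          - (↑(‖z₀‖ ^ (2*σ-2)) : ℂ) * z₀^2‖
      ≤ C * (‖zs‖ ^ (2*σ) + ‖z₀‖ ^ (2*σ-1) * ‖zs‖) := by
  set M : ℝ := 2 + 2 ^ (2*σ) with hMdef
  have hMpos : 0 < M := by positivity
  refine ⟨2*(2^(2*σ) + 3^(2*σ)) + 7*σ*M + 3, by positivity, ?_⟩
  intro z₀ zs θ hθ
  set w : ℂ := z₀ + (θ:ℂ) * zs with hwdef
  set x : ℝ := ‖w‖ with hxdef
  set a : ℝ := ‖z₀‖ with hadef
  set b : ℝ := ‖zs‖ with hbdef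
  have hb : 0 ≤ b := norm_nonneg _
  have ha : 0 ≤ a := norm_nonneg _
  have hx0 : 0 ≤ x := norm_nonneg _
  have hθb : ‖(θ:ℂ) * zs‖ ≤ b := by
    rw [norm_mul, Complex.norm_real, Real.norm_eq_abs]
    have h1 : |θ| ≤ 1 := abs_le.mpr ⟨by linarith [hθ.1], hθ.2⟩
    nlinarith [abs_nonneg θ]
  have hxab : x ≤ a + b := by
    calc x ≤ a + ‖(θ:ℂ) * zs‖ := norm_add_le _ _
      _ ≤ a + b := by linarith
  have haxb : a - b ≤ x := by
    have : a ≤ x + b := by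
      calc a = ‖w - (θ:ℂ) * zs‖ := by rw [hwdef]; ring_nf; exact hadef
        _ ≤ x + ‖(θ:ℂ) * zs‖ := norm_sub_le _ _
        _ ≤ x + b := by linarith
    linarith
  have hxa : |x - a| ≤ b := abs_le.mpr ⟨by linarith, by linarith⟩
  have hbσ : 0 ≤ b ^ (2*σ) := Real.rpow_nonneg hb _
  have haσ1b : 0 ≤ a ^ (2*σ-1) * b := mul_nonneg (Real.rpow_nonneg ha _) hb
  have h2σ2 : (0:ℝ) ≤ 2*σ - 2 := by linarith
  have habsA : ‖(↑(x ^ (2*σ-2)) : ℂ) * w^2‖ = x ^ (2*σ) := by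
    rw [norm_mul, norm_pow, Complex.norm_real, Real.norm_eq_abs,
      _root_.abs_of_nonneg (Real.rpow_nonneg hx0 _), ← hxdef, rpow_mul_sq hx0 h2σ2]
    congr 1; ring
  have habsB : ‖(↑(a ^ (2*σ-2)) : ℂ) * z₀^2‖ = a ^ (2*σ) := by
    rw [norm_mul, norm_pow, Complex.norm_real, Real.norm_eq_abs,
      _root_.abs_of_nonneg (Real.rpow_nonneg ha _), ← hadef, rpow_mul_sq ha h2σ2]
    congr 1; ring
  rcases le_or_gt a (2*b) with hcase | hcase
  · -- Case 1 : a ≤ 2b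
    have hx3b : x ≤ 3*b := by linarith
    have hxσ : x ^ (2*σ) ≤ 3 ^ (2*σ) * b ^ (2*σ) := by
      calc x ^ (2*σ) ≤ (3*b) ^ (2*σ) := Real.rpow_le_rpow hx0 hx3b (by linarith)
        _ = 3 ^ (2*σ) * b ^ (2*σ) := Real.mul_rpow (by norm_num) hb
    have haσ : a ^ (2*σ) ≤ 2 ^ (2*σ) * b ^ (2*σ) := by
      calc a ^ (2*σ) ≤ (2*b) ^ (2*σ) := Real.rpow_le_rpow ha hcase (by linarith)
        _ = 2 ^ (2*σ) * b ^ (2*σ) := Real.mul_rpow (by norm_num) hb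
    have hT1 : |x ^ (2*σ) - a ^ (2*σ)| ≤ x ^ (2*σ) + a ^ (2*σ) := by
      rw [abs_le]
      constructor <;>
        nlinarith [Real.rpow_nonneg hx0 (2*σ), Real.rpow_nonneg ha (2*σ)]
    have hT2 : ‖(↑(x ^ (2*σ-2)) : ℂ) * w^2 - (↑(a ^ (2*σ-2)) : ℂ) * z₀^2‖
        ≤ x ^ (2*σ) + a ^ (2*σ) := by
      calc ‖(↑(x ^ (2*σ-2)) : ℂ) * w^2 - (↑(a ^ (2*σ-2)) : ℂ) * z₀^2‖
          ≤ ‖(↑(x ^ (2*σ-2)) : ℂ) * w^2‖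
            + ‖(↑(a ^ (2*σ-2)) : ℂ) * z₀^2‖ := norm_sub_le _ _
        _ = x ^ (2*σ) + a ^ (2*σ) := by rw [habsA, habsB]
    have hP1 : 0 ≤ (7*σ*M + 3) * b ^ (2*σ) := mul_nonneg (by positivity) hbσ
    have hP2 : 0 ≤ (2*(2^(2*σ) + 3^(2*σ)) + 7*σ*M + 3) * (a ^ (2*σ-1) * b) :=
      mul_nonneg (by positivity) haσ1b
    linarith [hT1, hT2, hxσ, haσ, hP1, hP2]
  · -- Case 2 : 2b < a
    have ha0 : 0 < a := by linarith
    have hba2 : b ≤ a/2 := by linarith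
    have hxmem : x ∈ Set.Icc (a/2) (3*a/2) := ⟨by linarith, by linarith⟩
    have hamem : a ∈ Set.Icc (a/2) (3*a/2) := ⟨by linarith, by linarith⟩
    have ha2 : 0 < a/2 := by linarith
    have haq1 : 0 ≤ a ^ (2*σ-1) := Real.rpow_nonneg ha _
    have haq3 : 0 ≤ a ^ (2*σ-3) := Real.rpow_nonneg ha _
    have haq2' : 0 ≤ a ^ (2*σ-2) := Real.rpow_nonneg ha _
    have hmvt1 : |x ^ (2*σ) - a ^ (2*σ)| ≤ (2*σ) * (M * a ^ (2*σ-1)) * b := by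
      have h := mvt_rpow (p := 2*σ) (by linarith) ha2 hxmem hamem
      have hhb : (a/2) ^ (2*σ-1) + (3*a/2) ^ (2*σ-1) ≤ M * a ^ (2*σ-1) :=
        half_bound hσ ha0 (by linarith) (by linarith)
      calc |x ^ (2*σ) - a ^ (2*σ)|
          ≤ (2*σ) * ((a/2) ^ (2*σ-1) + (3*a/2) ^ (2*σ-1)) * |x - a| := h
        _ ≤ (2*σ) * (M * a ^ (2*σ-1)) * b := by
            apply mul_le_mul (mul_le_mul_of_nonneg_left hhb (by linarith)) hxa
              (abs_nonneg _) (by positivity)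
    have hmvt2 : |x ^ (2*σ-2) - a ^ (2*σ-2)| ≤ (2*σ-2) * (M * a ^ (2*σ-3)) * b := by
      have h := mvt_rpow (p := 2*σ-2) h2σ2 ha2 hxmem hamem
      have hhb : (a/2) ^ (2*σ-3) + (3*a/2) ^ (2*σ-3) ≤ M * a ^ (2*σ-3) :=
        half_bound hσ ha0 (by linarith) (by linarith)
      calc |x ^ (2*σ-2) - a ^ (2*σ-2)|
          ≤ (2*σ-2) * ((a/2) ^ (2*σ-2-1) + (3*a/2) ^ (2*σ-2-1)) * |x - a| := h
        _ = (2*σ-2) * ((a/2) ^ (2*σ-3) + (3*a/2) ^ (2*σ-3)) * |x - a| := by ring_nf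
        _ ≤ (2*σ-2) * (M * a ^ (2*σ-3)) * b := by
            apply mul_le_mul (mul_le_mul_of_nonneg_left hhb (by linarith)) hxa
              (abs_nonneg _) (by positivity)
    have hT2 : ‖(↑(x ^ (2*σ-2)) : ℂ) * w^2 - (↑(a ^ (2*σ-2)) : ℂ) * z₀^2‖
        ≤ |x ^ (2*σ-2) - a ^ (2*σ-2)| * x^2 + a ^ (2*σ-2) * (b * (x + a)) := by
      have hsplit : (↑(x ^ (2*σ-2)) : ℂ) * w^2 - (↑(a ^ (2*σ-2)) : ℂ) * z₀^2
          = ((↑(x ^ (2*σ-2)) : ℂ) - ↑(a ^ (2*σ-2))) * w^2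
            + (↑(a ^ (2*σ-2)) : ℂ) * ((w - z₀) * (w + z₀)) := by ring
      rw [hsplit]
      refine le_trans (norm_add_le _ _) ?_
      rw [norm_mul, norm_mul, norm_mul, norm_pow, ← Complex.ofReal_sub, Complex.norm_real,
        Real.norm_eq_abs, Complex.norm_real, Real.norm_eq_abs, _root_.abs_of_nonneg (Real.rpow_nonneg ha _), ← hxdef]
      have hwz : ‖w - z₀‖ ≤ b := by
        have h5 : w - z₀ = (θ:ℂ) * zs := by rw [hwdef]; ring
        rw [h5]; exact hθb
      have hwz2 : ‖w + z₀‖ ≤ x + a := by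
        calc ‖w + z₀‖ ≤ ‖w‖ + ‖z₀‖ := norm_add_le _ _
          _ = x + a := by rw [← hxdef, ← hadef]
      refine add_le_add le_rfl ?_
      exact mul_le_mul_of_nonneg_left
        (mul_le_mul hwz hwz2 (norm_nonneg _) hb) haq2'
    have hx2 : x^2 ≤ (3*a/2)^2 := by nlinarith [hxmem.2]
    have hkey3 : a ^ (2*σ-3) * (3*a/2)^2 = (9/4) * a ^ (2*σ-1) := by
      have h6 : a ^ (2*σ-3) * a^2 = a ^ (2*σ-1) := by
        rw [rpow_mul_sq_pos ha0]; congr 1; ring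
      calc a ^ (2*σ-3) * (3*a/2)^2 = (9/4) * (a ^ (2*σ-3) * a^2) := by ring
        _ = (9/4) * a ^ (2*σ-1) := by rw [h6]
    have hkey2 : a ^ (2*σ-2) * a = a ^ (2*σ-1) := by
      rw [rpow_mul_self_pos ha0]; congr 1; ring
    have e1' : |x ^ (2*σ-2) - a ^ (2*σ-2)| * x^2
        ≤ (9/4) * (2*σ-2) * M * (a ^ (2*σ-1) * b) := by
      calc |x ^ (2*σ-2) - a ^ (2*σ-2)| * x^2
          ≤ (2*σ-2) * (M * a ^ (2*σ-3)) * b * (3*a/2)^2 :=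
            mul_le_mul hmvt2 hx2 (by positivity) (by positivity)
        _ = (2*σ-2) * M * b * (a ^ (2*σ-3) * (3*a/2)^2) := by ring
        _ = (2*σ-2) * M * b * ((9/4) * a ^ (2*σ-1)) := by rw [hkey3]
        _ = (9/4) * (2*σ-2) * M * (a ^ (2*σ-1) * b) := by ring
    have e2 : a ^ (2*σ-2) * (b * (x + a)) ≤ (5/2) * (a ^ (2*σ-1) * b) := by
      have hxa52 : x + a ≤ (5/2) * a := by linarith [hxmem.2]
      calc a ^ (2*σ-2) * (b * (x + a)) ≤ a ^ (2*σ-2) * (b * ((5/2)*a)) :=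
            mul_le_mul_of_nonneg_left (mul_le_mul_of_nonneg_left hxa52 hb) haq2'
        _ = (5/2) * (a ^ (2*σ-2) * a * b) := by ring
        _ = (5/2) * (a ^ (2*σ-1) * b) := by rw [hkey2]
    have hL1 : |x ^ (2*σ) - a ^ (2*σ)| ≤ 2*σ*M*(a ^ (2*σ-1)*b) :=
      hmvt1.trans (le_of_eq (by ring))
    have hL2 : ‖(↑(x ^ (2*σ-2)) : ℂ) * w^2 - (↑(a ^ (2*σ-2)) : ℂ) * z₀^2‖
        ≤ (9/4*(2*σ-2)*M + 5/2) * (a ^ (2*σ-1)*b) :=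
      hT2.trans ((add_le_add e1' e2).trans (le_of_eq (by ring)))
    have harith := final_arith (u := b ^ (2*σ)) (v := a ^ (2*σ-1)*b)
      hσ hMpos hbσ haσ1b
      (Real.rpow_nonneg (by norm_num : (0:ℝ) ≤ 2) (2*σ))
      (Real.rpow_nonneg (by norm_num : (0:ℝ) ≤ 3) (2*σ))
    clear_value M w x a b
    linarith [hL1, hL2, harith]
end

section
/- Let σ ≥ 1 be a real number and n a natural number. There exists a constant C > 0, depending only on σ and n, such that for all complex numbers z₀, z_* and all θ ∈ [0,1], with z_θ = z₀ + θ·z_*: | |z_θ|^{2σ−1−n} z_θ^n − |z₀|^{2σ−1−n} z₀^n | ≤ C ( |z_*|^{2σ−1} + |z₀|^{2σ−2} |z_*| ). -/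
open Complex

noncomputable def Complex.abs : AbsoluteValue ℂ ℝ :=
  IsAbsoluteValue.toAbsoluteValue (norm : ℂ → ℝ)

theorem Complex.abs_ofReal (r : ℝ) : Complex.abs (r : ℂ) = |r| := Complex.norm_real r

theorem Complex.norm_eq_abs (z : ℂ) : ‖z‖ = Complex.abs z := rfl

private lemma rpow_diff_le {a b α : ℝ} (hb : 0 ≤ b) (hba : b ≤ a) (hα : 1 ≤ α) :
    a ^ α - b ^ α ≤ α * a ^ (α - 1) * (a - b) := by
  have ha : 0 ≤ a := hb.trans hba
  rcases ha.eq_or_lt with h0 | h0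
  · have hb0 : b = 0 := le_antisymm (h0 ▸ hba) hb
    subst hb0
    rw [← h0, Real.zero_rpow (by linarith)]
    simp
  · set t := b / a with ht
    have ht0 : 0 ≤ t := div_nonneg hb h0.le
    have ht1 : t ≤ 1 := (div_le_one h0).mpr hba
    have hbern : 1 + α * (t - 1) ≤ t ^ α := by
      have h := one_add_mul_self_le_rpow_one_add (s := t - 1) (by linarith) hα
      rwa [show (1 : ℝ) + (t - 1) = t by ring] at h
    have hb_eq : b ^ α = a ^ α * t ^ α := by
      rw [← Real.mul_rpow h0.le ht0, ht, mul_div_cancel₀ _ h0.ne']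
    have hpow : a ^ (α - 1) * a = a ^ α := by
      have h := Real.rpow_add h0 (α - 1) 1
      rw [sub_add_cancel, Real.rpow_one] at h
      exact h.symm
    have hA : 0 ≤ a ^ α := Real.rpow_nonneg h0.le α
    have key : a ^ α * (1 - t ^ α) ≤ a ^ α * (α * (1 - t)) :=
      mul_le_mul_of_nonneg_left (by linarith) hA
    have hat : a * (1 - t) = a - b := by
      rw [ht, mul_sub, mul_one, mul_div_cancel₀ _ h0.ne']
    calc a ^ α - b ^ α = a ^ α * (1 - t ^ α) := by rw [hb_eq]; ring
      _ ≤ a ^ α * (α * (1 - t)) := key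
      _ = α * a ^ (α - 1) * (a * (1 - t)) := by rw [← hpow]; ring
      _ = α * a ^ (α - 1) * (a - b) := by rw [hat]

private lemma pow_diff_le {p q : ℂ} (hp : Complex.abs p ≤ 1) (hq : Complex.abs q ≤ 1) (n : ℕ) :
    Complex.abs (p ^ n - q ^ n) ≤ n * Complex.abs (p - q) := by
  have hsum : Complex.abs (∑ i ∈ Finset.range n, p ^ i * q ^ (n - 1 - i)) ≤ n := by
    calc Complex.abs (∑ i ∈ Finset.range n, p ^ i * q ^ (n - 1 - i))
        ≤ ∑ i ∈ Finset.range n, Complex.abs (p ^ i * q ^ (n - 1 - i)) :=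
          Complex.abs.sum_le _ _
      _ ≤ ∑ _i ∈ Finset.range n, 1 := by
          apply Finset.sum_le_sum
          intro i _
          rw [map_mul, map_pow, map_pow]
          exact mul_le_one₀ (pow_le_one₀ (Complex.abs.nonneg p) hp)
            (pow_nonneg (Complex.abs.nonneg q) _) (pow_le_one₀ (Complex.abs.nonneg q) hq)
      _ = n := by simp
  calc Complex.abs (p ^ n - q ^ n)
      = Complex.abs (∑ i ∈ Finset.range n, p ^ i * q ^ (n - 1 - i)) * Complex.abs (p - q) := by
        rw [← map_mul, geom_sum₂_mul]
    _ ≤ n * Complex.abs (p - q) := by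
        exact mul_le_mul_of_nonneg_right hsum (Complex.abs.nonneg _)

private lemma unit_diff_le {u v : ℂ} (hu : u ≠ 0) (hv : v ≠ 0)
    (hvu : Complex.abs v ≤ Complex.abs u) :
    Complex.abs (u / (Complex.abs u : ℂ) - v / (Complex.abs v : ℂ))
      ≤ 2 * Complex.abs (u - v) / Complex.abs u := by
  set A := Complex.abs u with hA
  set B := Complex.abs v with hB
  have hA0 : 0 < A := Complex.abs.pos hu
  have hB0 : 0 < B := Complex.abs.pos hv
  have hAc : (A : ℂ) ≠ 0 := by exact_mod_cast hA0.ne'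
  have hBc : (B : ℂ) ≠ 0 := by exact_mod_cast hB0.ne'
  have key : u / (A : ℂ) - v / (B : ℂ)
      = (u - v) / (A : ℂ) + (v / (B : ℂ)) * (((B - A : ℝ) : ℂ) / (A : ℂ)) := by
    field_simp
    push_cast
    ring
  have habs2 : Complex.abs ((v / (B : ℂ)) * (((B - A : ℝ) : ℂ) / (A : ℂ)))
      ≤ Complex.abs (u - v) / A := by
    rw [map_mul, map_div₀, map_div₀, Complex.abs_ofReal, Complex.abs_ofReal,
      Complex.abs_ofReal]
    rw [abs_of_pos hB0, abs_of_pos hA0, div_self hB0.ne', one_mul]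
    have h1 : |B - A| ≤ Complex.abs (u - v) := by
      have := Complex.abs.abs_abv_sub_le_abv_sub v u
      rwa [Complex.abs.map_sub v u] at this
    gcongr
  calc Complex.abs (u / (A : ℂ) - v / (B : ℂ))
      ≤ Complex.abs ((u - v) / (A : ℂ))
        + Complex.abs ((v / (B : ℂ)) * (((B - A : ℝ) : ℂ) / (A : ℂ))) := by
        rw [key]; exact Complex.abs.add_le _ _
    _ ≤ Complex.abs (u - v) / A + Complex.abs (u - v) / A := by
        apply add_le_add _ habs2
        rw [map_div₀, Complex.abs_ofReal, abs_of_pos hA0]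
    _ = 2 * Complex.abs (u - v) / A := by ring

private lemma core_bound (α : ℝ) (hα : 1 ≤ α) (n : ℕ) (z w : ℂ)
    (hzw : Complex.abs z ≤ Complex.abs w) :
    Complex.abs ((↑(Complex.abs w ^ (α - (n : ℝ))) : ℂ) * w ^ n
        - (↑(Complex.abs z ^ (α - (n : ℝ))) : ℂ) * z ^ n)
      ≤ (α + 2 * n) * Complex.abs w ^ (α - 1) * Complex.abs (w - z) := by
  have hK : (1 : ℝ) ≤ α + 2 * n := by
    have : (0:ℝ) ≤ (n:ℝ) := Nat.cast_nonneg n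
    linarith
  by_cases hw : w = 0
  · have hz : z = 0 := by
      have := Complex.abs.nonneg z
      have h0 : Complex.abs z = 0 := le_antisymm (by simpa [hw] using hzw) this
      exact (Complex.abs.eq_zero).mp h0
    subst hw; subst hz
    simp
  · set W := Complex.abs w with hWdef
    have hW : 0 < W := Complex.abs.pos hw
    have hWc : (W : ℂ) ≠ 0 := by exact_mod_cast hW.ne'
    have hWα : W ^ α = W ^ (α - 1) * W := by
      have h := Real.rpow_add hW (α - 1) 1
      rw [sub_add_cancel, Real.rpow_one] at h
      exact h
    by_cases hz : z = 0
    · subst hz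
      have hterm : (↑(Complex.abs (0:ℂ) ^ (α - (n : ℝ))) : ℂ) * (0:ℂ) ^ n = 0 := by
        rcases Nat.eq_zero_or_pos n with h | h
        · subst h
          simp [Real.zero_rpow (show α ≠ 0 by linarith)]
        · simp [pow_eq_zero_iff h.ne']
      rw [hterm, sub_zero, map_mul, Complex.abs_ofReal, map_pow,
        _root_.abs_of_nonneg (Real.rpow_nonneg (Complex.abs.nonneg w) _)]
      have hWn : W ^ (α - (n:ℝ)) * W ^ n = W ^ α := by
        rw [← Real.rpow_natCast W n, ← Real.rpow_add hW]
        ring_nf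
      rw [← hWdef, hWn, sub_zero, hWα, ← hWdef]
      have h1 : W ^ (α - 1) * W ≤ (α + 2 * n) * (W ^ (α - 1) * W) := by
        apply le_mul_of_one_le_left (by positivity) hK
      linarith
    · set Z := Complex.abs z with hZdef
      have hZ : 0 < Z := Complex.abs.pos hz
      have hZc : (Z : ℂ) ≠ 0 := by exact_mod_cast hZ.ne'
      set P := (w / (W : ℂ)) ^ n with hPdef
      set Q := (z / (Z : ℂ)) ^ n with hQdef
      have habsP : Complex.abs (w / (W : ℂ)) = 1 := by
        rw [map_div₀, Complex.abs_ofReal, abs_of_pos hW, div_self hW.ne']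
      have habsQ : Complex.abs (z / (Z : ℂ)) = 1 := by
        rw [map_div₀, Complex.abs_ofReal, abs_of_pos hZ, div_self hZ.ne']
      have hfw : ∀ (u : ℂ) (hu : u ≠ 0),
          (↑(Complex.abs u ^ (α - (n : ℝ))) : ℂ) * u ^ n
            = (↑(Complex.abs u ^ α) : ℂ) * (u / (Complex.abs u : ℂ)) ^ n := by
        intro u hu
        have hU : 0 < Complex.abs u := Complex.abs.pos hu
        have hUc : (Complex.abs u : ℂ) ≠ 0 := by exact_mod_cast hU.ne'
        rw [div_pow, Real.rpow_sub hU, Real.rpow_natCast]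
        push_cast
        field_simp
      rw [hfw w hw, hfw z hz, ← hWdef, ← hZdef, ← hPdef, ← hQdef]
      have hdecomp : (↑(W ^ α) : ℂ) * P - (↑(Z ^ α) : ℂ) * Q
          = (↑(W ^ α - Z ^ α) : ℂ) * P + (↑(Z ^ α) : ℂ) * (P - Q) := by
        push_cast
        ring
      have hPabs : Complex.abs P = 1 := by rw [hPdef, map_pow, habsP, one_pow]
      have hZαW : Z ^ α ≤ W ^ α := Real.rpow_le_rpow hZ.le hzw (by linarith)
      have hWZ : W - Z ≤ Complex.abs (w - z) := by
        have := norm_sub_norm_le w z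
        simpa [Complex.norm_eq_abs] using this
      have hbound1 : Complex.abs ((↑(W ^ α - Z ^ α) : ℂ) * P)
          ≤ α * W ^ (α - 1) * Complex.abs (w - z) := by
        rw [map_mul, hPabs, mul_one, Complex.abs_ofReal,
          _root_.abs_of_nonneg (by linarith : (0:ℝ) ≤ W ^ α - Z ^ α)]
        calc W ^ α - Z ^ α ≤ α * W ^ (α - 1) * (W - Z) := rpow_diff_le hZ.le hzw hα
          _ ≤ α * W ^ (α - 1) * Complex.abs (w - z) := by
              apply mul_le_mul_of_nonneg_left hWZ (by positivity)
      have hbound2 : Complex.abs ((↑(Z ^ α) : ℂ) * (P - Q))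
          ≤ 2 * n * W ^ (α - 1) * Complex.abs (w - z) := by
        rw [map_mul, Complex.abs_ofReal, _root_.abs_of_nonneg (Real.rpow_nonneg hZ.le α)]
        have hPQ : Complex.abs (P - Q)
            ≤ n * (2 * Complex.abs (w - z) / W) := by
          calc Complex.abs (P - Q)
              ≤ n * Complex.abs (w / (W : ℂ) - z / (Z : ℂ)) :=
                pow_diff_le (le_of_eq habsP) (le_of_eq habsQ) n
            _ ≤ n * (2 * Complex.abs (w - z) / W) := by
                apply mul_le_mul_of_nonneg_left (unit_diff_le hw hz hzw) (Nat.cast_nonneg n)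
        calc Z ^ α * Complex.abs (P - Q)
            ≤ W ^ α * (n * (2 * Complex.abs (w - z) / W)) := by
              apply mul_le_mul hZαW hPQ (Complex.abs.nonneg _)
                (Real.rpow_nonneg (Complex.abs.nonneg w) α)
          _ = 2 * n * W ^ (α - 1) * Complex.abs (w - z) := by
              rw [hWα]; field_simp
      calc Complex.abs ((↑(W ^ α) : ℂ) * P - (↑(Z ^ α) : ℂ) * Q)
          ≤ Complex.abs ((↑(W ^ α - Z ^ α) : ℂ) * P)
            + Complex.abs ((↑(Z ^ α) : ℂ) * (P - Q)) := by
            rw [hdecomp]; exact Complex.abs.add_le _ _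
        _ ≤ α * W ^ (α - 1) * Complex.abs (w - z)
            + 2 * n * W ^ (α - 1) * Complex.abs (w - z) := add_le_add hbound1 hbound2
        _ = (α + 2 * n) * W ^ (α - 1) * Complex.abs (w - z) := by ring

private lemma add_rpow_le_two_rpow {a b p : ℝ} (ha : 0 ≤ a) (hb : 0 ≤ b) (hp : 0 ≤ p) :
    (a + b) ^ p ≤ 2 ^ p * (a ^ p + b ^ p) := by
  have hmax : 0 ≤ max a b := le_max_of_le_left ha
  have h1 : a + b ≤ 2 * max a b := by
    rcases le_total a b with h | h
    · rw [max_eq_right h]; linarith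
    · rw [max_eq_left h]; linarith
  calc (a + b) ^ p ≤ (2 * max a b) ^ p :=
        Real.rpow_le_rpow (by positivity) h1 hp
    _ = 2 ^ p * (max a b) ^ p := Real.mul_rpow (by norm_num) hmax
    _ ≤ 2 ^ p * (a ^ p + b ^ p) := by
        apply mul_le_mul_of_nonneg_left _ (Real.rpow_nonneg (by norm_num) p)
        rcases le_total a b with h | h
        · rw [max_eq_right h]
          exact le_add_of_nonneg_left (Real.rpow_nonneg ha p)
        · rw [max_eq_left h]
          exact le_add_of_nonneg_right (Real.rpow_nonneg hb p)

/-- bound for the difference `|z_θ|^{2σ−1−n} z_θ^n − |z₀|^{2σ−1−n} z₀^n`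
along the segment `z_θ = z₀ + θ z_*`. -/
theorem segment_difference_bound_pow (σ : ℝ) (hσ : 1 ≤ σ) (n : ℕ) :
    ∃ C > 0, ∀ (z₀ zs : ℂ) (θ : ℝ), θ ∈ Set.Icc (0:ℝ) 1 →
      ‖(↑(‖z₀ + ↑θ * zs‖ ^ (2*σ-1-(n:ℝ))) : ℂ) * (z₀ + ↑θ * zs)^n
          - (↑(‖z₀‖ ^ (2*σ-1-(n:ℝ))) : ℂ) * z₀^n‖
        ≤ C * (‖zs‖ ^ (2*σ-1) + ‖z₀‖ ^ (2*σ-2) * ‖zs‖) := by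
  show ∃ C > 0, ∀ (z₀ zs : ℂ) (θ : ℝ), θ ∈ Set.Icc (0:ℝ) 1 →
      Complex.abs ((↑(Complex.abs (z₀ + ↑θ * zs) ^ (2*σ-1-(n:ℝ))) : ℂ) * (z₀ + ↑θ * zs)^n
          - (↑(Complex.abs z₀ ^ (2*σ-1-(n:ℝ))) : ℂ) * z₀^n)
        ≤ C * (Complex.abs zs ^ (2*σ-1) + Complex.abs z₀ ^ (2*σ-2) * Complex.abs zs)
  have hα : (1:ℝ) ≤ 2*σ - 1 := by linarith
  set α := 2*σ - 1 with hαdef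
  have hK : (0:ℝ) < α + 2*n := by
    have : (0:ℝ) ≤ (n:ℝ) := Nat.cast_nonneg n
    linarith
  refine ⟨(α + 2*n) * 2 ^ (α - 1), mul_pos hK (Real.rpow_pos_of_pos two_pos _), ?_⟩
  intro z₀ zs θ hθ
  obtain ⟨hθ0, hθ1⟩ := hθ
  rw [show (2*σ-2 : ℝ) = α - 1 by rw [hαdef]; ring]
  set w := z₀ + (θ:ℂ) * zs with hwdef
  set Z₀ := Complex.abs z₀ with hZ₀
  set Zs := Complex.abs zs with hZs
  set W := Complex.abs w with hW
  have hθzs : Complex.abs ((θ:ℂ) * zs) ≤ Zs := by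
    rw [map_mul, Complex.abs_ofReal, _root_.abs_of_nonneg hθ0]
    exact mul_le_of_le_one_left (Complex.abs.nonneg zs) hθ1
  have habsθ : Complex.abs (w - z₀) ≤ Zs := by
    rw [hwdef, show z₀ + (θ:ℂ) * zs - z₀ = (θ:ℂ) * zs by ring]
    exact hθzs
  have hcore : Complex.abs ((↑(W ^ (α - (n:ℝ))) : ℂ) * w ^ n
        - (↑(Z₀ ^ (α - (n:ℝ))) : ℂ) * z₀ ^ n)
      ≤ (α + 2*n) * (max W Z₀) ^ (α - 1) * Complex.abs (w - z₀) := by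
    rcases le_total Z₀ W with h | h
    · rw [max_eq_left h]
      exact core_bound α hα n z₀ w h
    · rw [max_eq_right h]
      calc Complex.abs ((↑(W ^ (α - (n:ℝ))) : ℂ) * w ^ n
            - (↑(Z₀ ^ (α - (n:ℝ))) : ℂ) * z₀ ^ n)
          = Complex.abs ((↑(Z₀ ^ (α - (n:ℝ))) : ℂ) * z₀ ^ n
            - (↑(W ^ (α - (n:ℝ))) : ℂ) * w ^ n) := Complex.abs.map_sub _ _
        _ ≤ (α + 2*n) * Z₀ ^ (α - 1) * Complex.abs (z₀ - w) := core_bound α hα n w z₀ h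
        _ = (α + 2*n) * Z₀ ^ (α - 1) * Complex.abs (w - z₀) := by
            rw [Complex.abs.map_sub z₀ w]
  have hmax : max W Z₀ ≤ Z₀ + Zs := by
    apply max_le
    · rw [hW, hwdef]
      calc Complex.abs (z₀ + (θ:ℂ) * zs) ≤ Z₀ + Complex.abs ((θ:ℂ) * zs) :=
            Complex.abs.add_le _ _
        _ ≤ Z₀ + Zs := by linarith
    · exact le_add_of_nonneg_right (Complex.abs.nonneg zs)
  have hmaxnn : (0:ℝ) ≤ max W Z₀ := le_max_of_le_left (Complex.abs.nonneg w)
  have hM : (max W Z₀) ^ (α - 1) ≤ 2 ^ (α - 1) * (Z₀ ^ (α - 1) + Zs ^ (α - 1)) := by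
    calc (max W Z₀) ^ (α - 1) ≤ (Z₀ + Zs) ^ (α - 1) :=
          Real.rpow_le_rpow hmaxnn hmax (by linarith)
      _ ≤ 2 ^ (α - 1) * (Z₀ ^ (α - 1) + Zs ^ (α - 1)) :=
          add_rpow_le_two_rpow (Complex.abs.nonneg z₀) (Complex.abs.nonneg zs) (by linarith)
  have hZsα : Zs ^ (α - 1) * Zs = Zs ^ α := by
    rcases (Complex.abs.nonneg zs).eq_or_lt with h | h
    · rw [hZs, ← h, mul_zero, Real.zero_rpow (show α ≠ 0 by linarith)]
    · have hh := Real.rpow_add h (α - 1) 1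
      rw [sub_add_cancel, Real.rpow_one] at hh
      exact hh.symm
  calc Complex.abs ((↑(W ^ (α - (n:ℝ))) : ℂ) * w ^ n - (↑(Z₀ ^ (α - (n:ℝ))) : ℂ) * z₀ ^ n)
      ≤ (α + 2*n) * (max W Z₀) ^ (α - 1) * Complex.abs (w - z₀) := hcore
    _ ≤ (α + 2*n) * (2 ^ (α - 1) * (Z₀ ^ (α - 1) + Zs ^ (α - 1))) * Zs := by
        apply mul_le_mul _ habsθ (Complex.abs.nonneg _) _
        · exact mul_le_mul_of_nonneg_left hM hK.le
        · positivity
    _ = (α + 2*n) * 2 ^ (α - 1) * (Zs ^ (α - 1) * Zs + Z₀ ^ (α - 1) * Zs) := by ring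
    _ = (α + 2*n) * 2 ^ (α - 1) * (Zs ^ α + Z₀ ^ (α - 1) * Zs) := by rw [hZsα]
end

section
/- Let σ ≥ 1. There exists a constant C > 0, depending only on σ, with the following property: for every φ ∈ L^∞(ℝ; ℂ) and all measurable functions v_p, v_* : ℝ → ℂ with |v_p(x)| = |φ(x)| for almost every x and with v_* ∈ L²(ℝ) ∩ L^∞(ℝ), one has ‖G_σ[v_p, v_*]‖_{L²(ℝ)} ≤ C ( ‖v_*‖_{L^∞}^{2σ} + ‖φ‖_{L^∞}^{2σ−1} ‖v_*‖_{L^∞} ) ‖v_*‖_{L²}. -/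
open MeasureTheory Complex

/-- The nonlinear remainder `G_σ[v_p, v_*]` from the paper:
`G_σ[v_p,v_*](x) = (σ+1) v_*(x) ∫₀¹ (|v_θ(x)|^{2σ} − |v_p(x)|^{2σ}) dθ
  + σ conj(v_*(x)) ∫₀¹ (|v_θ(x)|^{2σ−2} v_θ(x)² − |v_p(x)|^{2σ−2} v_p(x)²) dθ`,
where `v_θ = v_p + θ v_*`. -/
noncomputable def Gfun (σ' : ℝ) (vp vs : ℝ → ℂ) (x : ℝ) : ℂ :=
  (↑(σ'+1) : ℂ) * vs x *
      (∫ θ in (0:ℝ)..1,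
        ((↑(‖vp x + ↑θ * vs x‖ ^ (2*σ')) : ℂ)
          - (↑(‖vp x‖ ^ (2*σ')) : ℂ)))
  + (↑σ' : ℂ) * (starRingEnd ℂ) (vs x) *
      (∫ θ in (0:ℝ)..1,
        ((↑(‖vp x + ↑θ * vs x‖ ^ (2*σ'-2)) : ℂ) * (vp x + ↑θ * vs x)^2
          - (↑(‖vp x‖ ^ (2*σ'-2)) : ℂ) * (vp x)^2))

/-- `x^r * x = x^(r+1)` for nonnegative base and exponent. -/
lemma rpow_mul_self_aux {x r : ℝ} (hx : 0 ≤ x) (hr : 0 ≤ r) :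
    x ^ r * x = x ^ (r + 1) := by
  rcases eq_or_lt_of_le hx with h | h
  · rw [← h, mul_zero, Real.zero_rpow (by positivity : r + 1 ≠ 0)]
  · rw [Real.rpow_add_one h.ne' r]

/-- Tangent line inequality for convex rpow. -/
lemma tangent_ineq {q a b : ℝ} (hq : 1 ≤ q) (hb : 0 ≤ b) (hba : b ≤ a) :
    a ^ q - b ^ q ≤ q * a ^ (q - 1) * (a - b) := by
  rcases eq_or_lt_of_le (hb.trans hba) with h | ha
  · have hb0 : b = 0 := le_antisymm (h ▸ hba) hb
    rw [← h, hb0, Real.zero_rpow (by intro h0; rw [h0] at hq; linarith : q ≠ 0)]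
    simp
  · have key := one_add_mul_self_le_rpow_one_add
      (s := b / a - 1) (by have : (0:ℝ) ≤ b / a := div_nonneg hb ha.le; linarith) hq
    have h1 : (1 : ℝ) + (b / a - 1) = b / a := by ring
    rw [h1] at key
    have haq : (0:ℝ) < a ^ q := Real.rpow_pos_of_pos ha q
    have key2 : (1 + q * (b / a - 1)) * a ^ q ≤ b ^ q := by
      calc (1 + q * (b / a - 1)) * a ^ q ≤ (b / a) ^ q * a ^ q :=
            mul_le_mul_of_nonneg_right key haq.le
        _ = b ^ q := by
            rw [Real.div_rpow hb ha.le, div_mul_cancel₀ _ haq.ne']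
    have e1 : (1 + q * (b / a - 1)) * a ^ q = a ^ q - q * a ^ (q - 1) * (a - b) := by
      rw [Real.rpow_sub_one ha.ne' q]
      field_simp
      ring
    linarith [e1 ▸ key2]

/-- One-sided Lipschitz bound for rpow. -/
lemma rpow_lip_one {q M a b : ℝ} (hq : 1 ≤ q) (hb : 0 ≤ b) (hba : b ≤ a) (haM : a ≤ M) :
    a ^ q - b ^ q ≤ q * M ^ (q - 1) * (a - b) := by
  refine (tangent_ineq hq hb hba).trans ?_
  have h1 : a ^ (q - 1) ≤ M ^ (q - 1) :=
    Real.rpow_le_rpow (hb.trans hba) haM (by linarith)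
  have hq0 : (0:ℝ) ≤ q := by linarith
  apply mul_le_mul_of_nonneg_right _ (by linarith : (0:ℝ) ≤ a - b)
  exact mul_le_mul_of_nonneg_left h1 hq0

/-- Lipschitz bound for rpow: `|a^q - b^q| ≤ q M^{q-1} |a-b|`. -/
lemma rpow_lip {q M a b : ℝ} (hq : 1 ≤ q) (ha : 0 ≤ a) (hb : 0 ≤ b)
    (haM : a ≤ M) (hbM : b ≤ M) :
    |a ^ q - b ^ q| ≤ q * M ^ (q - 1) * |a - b| := by
  rcases le_total b a with h | h
  · rw [_root_.abs_of_nonneg (sub_nonneg.2 (Real.rpow_le_rpow hb h (by linarith))),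
      _root_.abs_of_nonneg (sub_nonneg.2 h)]
    exact rpow_lip_one hq hb h haM
  · rw [abs_sub_comm, abs_sub_comm a b,
      _root_.abs_of_nonneg (sub_nonneg.2 (Real.rpow_le_rpow ha h (by linarith))),
      _root_.abs_of_nonneg (sub_nonneg.2 h)]
    exact rpow_lip_one hq ha h hbM

/-- `|a^r - b^r| * b ≤ |a^{r+1} - b^{r+1}|` for nonnegative `a, b, r`. -/
lemma abs_rpow_sub_mul_le {r a b : ℝ} (hr : 0 ≤ r) (ha : 0 ≤ a) (hb : 0 ≤ b) :
    |a ^ r - b ^ r| * b ≤ |a ^ (r+1) - b ^ (r+1)| := by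
  rcases le_total a b with h | h
  · rw [_root_.abs_of_nonpos (sub_nonpos.2 (Real.rpow_le_rpow ha h hr)),
      _root_.abs_of_nonpos (sub_nonpos.2 (Real.rpow_le_rpow ha h (by linarith)))]
    have h1 : a ^ r * a ≤ a ^ r * b := by
      have := Real.rpow_nonneg ha r; nlinarith
    rw [rpow_mul_self_aux ha hr] at h1
    have h2 : b ^ r * b = b ^ (r+1) := rpow_mul_self_aux hb hr
    nlinarith
  · rw [_root_.abs_of_nonneg (sub_nonneg.2 (Real.rpow_le_rpow hb h hr)),
      _root_.abs_of_nonneg (sub_nonneg.2 (Real.rpow_le_rpow hb h (by linarith)))]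
    have h1 : b ^ r * b = b ^ (r+1) := rpow_mul_self_aux hb hr
    have h2 : a ^ r * b ≤ a ^ r * a := by
      have := Real.rpow_nonneg ha r; nlinarith
    rw [rpow_mul_self_aux ha hr] at h2
    nlinarith

/-- Lipschitz bound for `z ↦ |z|^r z²`. -/
lemma complex_pow_lip {r M : ℝ} (hr : 0 ≤ r) {z w : ℂ}
    (hz : ‖z‖ ≤ M) (hw : ‖w‖ ≤ M) :
    ‖(↑(‖z‖ ^ r) : ℂ) * z^2 - (↑(‖w‖ ^ r) : ℂ) * w^2‖
      ≤ (r + 3) * M ^ (r+1) * ‖z - w‖ := by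
  have hM : 0 ≤ M := (norm_nonneg z).trans hz
  set az := ‖z‖ with haz
  set aw := ‖w‖ with haw
  have haz0 : 0 ≤ az := norm_nonneg z
  have haw0 : 0 ≤ aw := norm_nonneg w
  have decomp : (↑(az ^ r) : ℂ) * z^2 - (↑(aw ^ r) : ℂ) * w^2
      = (↑(az ^ r) : ℂ) * (z^2 - w^2) + ((↑(az ^ r) : ℂ) - ↑(aw ^ r)) * w^2 := by ring
  rw [decomp]
  have d0 : 0 ≤ ‖z - w‖ := norm_nonneg _
  have first : ‖(↑(az ^ r) : ℂ) * (z^2 - w^2)‖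
      ≤ 2 * M ^ (r+1) * ‖z - w‖ := by
    rw [norm_mul, Complex.norm_real, Real.norm_eq_abs, _root_.abs_of_nonneg (Real.rpow_nonneg haz0 r)]
    have e : z^2 - w^2 = (z + w) * (z - w) := by ring
    rw [e, norm_mul]
    have h1 : az ^ r ≤ M ^ r := Real.rpow_le_rpow haz0 hz hr
    have h2 : ‖z + w‖ ≤ 2 * M := by
      calc ‖z + w‖ ≤ az + aw := norm_add_le z w
        _ ≤ 2 * M := by linarith
    have h3 : (0:ℝ) ≤ az ^ r := Real.rpow_nonneg haz0 r
    have h4 : (0:ℝ) ≤ M ^ r := Real.rpow_nonneg hM r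
    have key : az ^ r * (‖z + w‖ * ‖z - w‖)
        ≤ M ^ r * (2 * M * ‖z - w‖) := by
      apply mul_le_mul h1 _ (by positivity) h4
      exact mul_le_mul_of_nonneg_right h2 d0
    calc az ^ r * (‖z + w‖ * ‖z - w‖)
        ≤ M ^ r * (2 * M * ‖z - w‖) := key
      _ = 2 * M ^ (r+1) * ‖z - w‖ := by
          rw [← rpow_mul_self_aux hM hr]; ring
  have second : ‖((↑(az ^ r) : ℂ) - ↑(aw ^ r)) * w^2‖
      ≤ (r + 1) * M ^ (r+1) * ‖z - w‖ := by
    rw [norm_mul, ← Complex.ofReal_sub, Complex.norm_real, Real.norm_eq_abs, norm_pow]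
    have hd : |az - aw| ≤ ‖z - w‖ :=
      abs_norm_sub_norm_le z w
    have key : |az ^ r - aw ^ r| * aw ≤ (r+1) * M ^ r * ‖z - w‖ := by
      calc |az ^ r - aw ^ r| * aw ≤ |az ^ (r+1) - aw ^ (r+1)| :=
            abs_rpow_sub_mul_le hr haz0 haw0
        _ ≤ (r+1) * M ^ ((r+1)-1) * |az - aw| :=
            rpow_lip (by linarith) haz0 haw0 hz hw
        _ = (r+1) * M ^ r * |az - aw| := by ring_nf
        _ ≤ (r+1) * M ^ r * ‖z - w‖ := by
            apply mul_le_mul_of_nonneg_left hd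
            positivity
    have haw2 : aw ^ 2 = aw * aw := sq aw
    rw [haw2]
    calc |az ^ r - aw ^ r| * (aw * aw) = |az ^ r - aw ^ r| * aw * aw := by ring
      _ ≤ (r+1) * M ^ r * ‖z - w‖ * M := by
          apply mul_le_mul key hw haw0
          positivity
      _ = (r+1) * (M ^ r * M) * ‖z - w‖ := by ring
      _ = (r+1) * M ^ (r+1) * ‖z - w‖ := by
          rw [rpow_mul_self_aux hM hr]
  calc ‖_‖ ≤ _ := norm_add_le _ _
    _ ≤ 2 * M ^ (r+1) * ‖z - w‖ + (r+1) * M ^ (r+1) * ‖z - w‖ :=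
        add_le_add first second
    _ = (r + 3) * M ^ (r+1) * ‖z - w‖ := by ring

set_option maxHeartbeats 1000000 in
/-- Pointwise bound for `Gfun`. -/
lemma Gfun_pointwise (σ : ℝ) (hσ : 1 ≤ σ) (vp vs : ℝ → ℂ) (x : ℝ) {Mφ Ms : ℝ}
    (hMφ : 0 ≤ Mφ) (hp : ‖vp x‖ ≤ Mφ) (hs : ‖vs x‖ ≤ Ms) :
    ‖Gfun σ vp vs x‖
      ≤ ((σ+1)*(2*σ) + σ*(2*σ+1)) * (Mφ + Ms) ^ (2*σ-1) * Ms * ‖vs x‖ := by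
  have hMs : 0 ≤ Ms := (norm_nonneg _).trans hs
  obtain ⟨M, hM⟩ : ∃ M : ℝ, M = Mφ + Ms := ⟨_, rfl⟩
  rw [← hM]
  have hM0 : 0 ≤ M := by rw [hM]; positivity
  have hpM : ‖vp x‖ ≤ M := by rw [hM]; linarith
  have hvθ : ∀ θ ∈ Set.uIoc (0:ℝ) 1, ‖vp x + ↑θ * vs x‖ ≤ M := by
    intro θ hθ
    rw [Set.uIoc_of_le (by norm_num : (0:ℝ) ≤ 1)] at hθ
    calc ‖vp x + ↑θ * vs x‖
        ≤ ‖vp x‖ + ‖(θ:ℂ) * vs x‖ := norm_add_le _ _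
      _ ≤ M := by
          rw [norm_mul, Complex.norm_real, Real.norm_eq_abs, _root_.abs_of_nonneg hθ.1.le, hM]
          have : θ * ‖vs x‖ ≤ 1 * Ms :=
            mul_le_mul hθ.2 hs (norm_nonneg _) zero_le_one
          linarith
  have hdiff : ∀ θ ∈ Set.uIoc (0:ℝ) 1,
      ‖(vp x + ↑θ * vs x) - vp x‖ ≤ Ms := by
    intro θ hθ
    rw [Set.uIoc_of_le (by norm_num : (0:ℝ) ≤ 1)] at hθ
    have e : (vp x + ↑θ * vs x) - vp x = (θ:ℂ) * vs x := by ring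
    rw [e, norm_mul, Complex.norm_real, Real.norm_eq_abs, _root_.abs_of_nonneg hθ.1.le]
    calc θ * ‖vs x‖ ≤ 1 * Ms :=
          mul_le_mul hθ.2 hs (norm_nonneg _) zero_le_one
      _ = Ms := one_mul Ms
  have hMq : (0:ℝ) ≤ 2*σ * M ^ (2*σ-1) := by positivity
  -- bound on first integral
  have I1 : ‖∫ θ in (0:ℝ)..1,
      ((↑(‖vp x + ↑θ * vs x‖ ^ (2*σ)) : ℂ)
        - (↑(‖vp x‖ ^ (2*σ)) : ℂ))‖
      ≤ 2*σ * M ^ (2*σ-1) * Ms := by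
    have hbound : ∀ θ ∈ Set.uIoc (0:ℝ) 1,
        ‖((↑(‖vp x + ↑θ * vs x‖ ^ (2*σ)) : ℂ)
          - (↑(‖vp x‖ ^ (2*σ)) : ℂ))‖ ≤ 2*σ * M ^ (2*σ-1) * Ms := by
      intro θ hθ
      rw [← Complex.ofReal_sub, Complex.norm_real, Real.norm_eq_abs]
      have hb := hvθ θ hθ
      have habsd : |‖vp x + ↑θ * vs x‖ - ‖vp x‖| ≤ Ms :=
        le_trans (abs_norm_sub_norm_le _ _) (hdiff θ hθ)
      have hq2 : (1:ℝ) ≤ 2*σ := by linarith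
      have hlip := rpow_lip hq2 (norm_nonneg _) (norm_nonneg _) hb hpM
      calc |‖vp x + ↑θ * vs x‖ ^ (2*σ) - ‖vp x‖ ^ (2*σ)|
          ≤ 2*σ * M ^ (2*σ-1) * |‖vp x + ↑θ * vs x‖ - ‖vp x‖| :=
            hlip
        _ ≤ 2*σ * M ^ (2*σ-1) * Ms := mul_le_mul_of_nonneg_left habsd hMq
    simpa using intervalIntegral.norm_integral_le_of_norm_le_const
      (a := (0:ℝ)) (b := 1) (C := 2*σ * M ^ (2*σ-1) * Ms)
      (f := fun θ => ((↑(‖vp x + ↑θ * vs x‖ ^ (2*σ)) : ℂ)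
        - (↑(‖vp x‖ ^ (2*σ)) : ℂ))) hbound
  -- bound on second integral
  have hMq' : (0:ℝ) ≤ (2*σ+1) * M ^ (2*σ-1) := by positivity
  have I2 : ‖∫ θ in (0:ℝ)..1,
      ((↑(‖vp x + ↑θ * vs x‖ ^ (2*σ-2)) : ℂ) * (vp x + ↑θ * vs x)^2
        - (↑(‖vp x‖ ^ (2*σ-2)) : ℂ) * (vp x)^2)‖
      ≤ (2*σ+1) * M ^ (2*σ-1) * Ms := by
    have hbound : ∀ θ ∈ Set.uIoc (0:ℝ) 1,
        ‖((↑(‖vp x + ↑θ * vs x‖ ^ (2*σ-2)) : ℂ) * (vp x + ↑θ * vs x)^2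
          - (↑(‖vp x‖ ^ (2*σ-2)) : ℂ) * (vp x)^2)‖
          ≤ (2*σ+1) * M ^ (2*σ-1) * Ms := by
      intro θ hθ
      have hr2 : (0:ℝ) ≤ 2*σ-2 := by linarith
      have key := complex_pow_lip hr2 (hvθ θ hθ) hpM
      have e1 : (2*σ-2) + 1 = 2*σ - 1 := by ring
      have e2 : (2*σ-2) + 3 = 2*σ + 1 := by ring
      rw [e1, e2] at key
      calc ‖(↑(‖vp x + ↑θ * vs x‖ ^ (2*σ-2)) : ℂ)
              * (vp x + ↑θ * vs x)^2
            - (↑(‖vp x‖ ^ (2*σ-2)) : ℂ) * (vp x)^2‖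
          ≤ (2*σ+1) * M ^ (2*σ-1) * ‖(vp x + ↑θ * vs x) - vp x‖ := key
        _ ≤ (2*σ+1) * M ^ (2*σ-1) * Ms := mul_le_mul_of_nonneg_left (hdiff θ hθ) hMq'
    simpa using intervalIntegral.norm_integral_le_of_norm_le_const
      (a := (0:ℝ)) (b := 1) (C := (2*σ+1) * M ^ (2*σ-1) * Ms)
      (f := fun θ => ((↑(‖vp x + ↑θ * vs x‖ ^ (2*σ-2)) : ℂ) * (vp x + ↑θ * vs x)^2
        - (↑(‖vp x‖ ^ (2*σ-2)) : ℂ) * (vp x)^2)) hbound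
  -- assemble
  unfold Gfun
  have t1 : ‖(↑(σ+1) : ℂ) * vs x *
      (∫ θ in (0:ℝ)..1,
        ((↑(‖vp x + ↑θ * vs x‖ ^ (2*σ)) : ℂ)
          - (↑(‖vp x‖ ^ (2*σ)) : ℂ)))‖
      ≤ (σ+1) * ‖vs x‖ * (2*σ * M ^ (2*σ-1) * Ms) := by
    rw [norm_mul, norm_mul, Complex.norm_real, Real.norm_eq_abs,
      _root_.abs_of_nonneg (by linarith : (0:ℝ) ≤ σ+1)]
    exact mul_le_mul_of_nonneg_left I1 (by positivity)
  have t2 : ‖(↑σ : ℂ) * (starRingEnd ℂ) (vs x) *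
      (∫ θ in (0:ℝ)..1,
        ((↑(‖vp x + ↑θ * vs x‖ ^ (2*σ-2)) : ℂ) * (vp x + ↑θ * vs x)^2
          - (↑(‖vp x‖ ^ (2*σ-2)) : ℂ) * (vp x)^2))‖
      ≤ σ * ‖vs x‖ * ((2*σ+1) * M ^ (2*σ-1) * Ms) := by
    rw [norm_mul, norm_mul, Complex.norm_real, Real.norm_eq_abs,
      _root_.abs_of_nonneg (by linarith : (0:ℝ) ≤ σ), Complex.norm_conj]
    exact mul_le_mul_of_nonneg_left I2 (by positivity)
  calc ‖_‖ ≤ _ := norm_add_le _ _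
    _ ≤ (σ+1) * ‖vs x‖ * (2*σ * M ^ (2*σ-1) * Ms)
        + σ * ‖vs x‖ * ((2*σ+1) * M ^ (2*σ-1) * Ms) := add_le_add t1 t2
    _ = ((σ+1)*(2*σ) + σ*(2*σ+1)) * M ^ (2*σ-1) * Ms * ‖vs x‖ := by ring

/-- L² bound for `G_σ[v_p, v_*]`. -/
theorem Gfun_L2_bound (σ : ℝ) (hσ : 1 ≤ σ) :
    ∃ C > 0, ∀ (φ vp vs : ℝ → ℂ),
      MemLp φ ⊤ volume →
      Measurable vp → Measurable vs →
      (∀ᵐ x : ℝ, ‖vp x‖ = ‖φ x‖) →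
      MemLp vs 2 volume → MemLp vs ⊤ volume →
      eLpNorm (Gfun σ vp vs) 2 volume
        ≤ ENNReal.ofReal C *
            ((eLpNorm vs ⊤ volume) ^ (2*σ)
              + (eLpNorm φ ⊤ volume) ^ (2*σ-1) * eLpNorm vs ⊤ volume)
            * eLpNorm vs 2 volume := by
  classical
  set C0 : ℝ := (σ+1)*(2*σ) + σ*(2*σ+1) with hC0
  have hC0pos : 0 < C0 := by nlinarith
  refine ⟨C0 * 2 ^ (2*σ-1), by positivity, ?_⟩
  intro φ vp vs hφ hmp hms habs hvs2 hvsInf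
  set EMs := eLpNorm vs ⊤ volume with hEMs
  set EMφ := eLpNorm φ ⊤ volume with hEMφ
  have hEMs_ne : EMs ≠ ⊤ := hvsInf.2.ne
  have hEMφ_ne : EMφ ≠ ⊤ := hφ.2.ne
  set Ms := EMs.toReal with hMs
  set Mφ := EMφ.toReal with hMφ
  have hMs0 : 0 ≤ Ms := ENNReal.toReal_nonneg
  have hMφ0 : 0 ≤ Mφ := ENNReal.toReal_nonneg
  -- a.e. bounds
  have hs_ae : ∀ᵐ x : ℝ, ‖vs x‖ ≤ Ms := by
    filter_upwards [ae_le_eLpNormEssSup (μ := volume) (f := vs)] with y hy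
    rw [← eLpNorm_exponent_top] at hy
    have h2 := ENNReal.toReal_mono hEMs_ne hy
    simpa using h2
  have hp_ae : ∀ᵐ x : ℝ, ‖vp x‖ ≤ Mφ := by
    filter_upwards [ae_le_eLpNormEssSup (μ := volume) (f := φ), habs] with y hy heq
    rw [← eLpNorm_exponent_top] at hy
    have h2 := ENNReal.toReal_mono hEMφ_ne hy
    rw [heq]
    simpa using h2
  set K : ℝ := C0 * (Mφ + Ms) ^ (2*σ-1) * Ms with hK
  have hKnn : 0 ≤ K := by positivity
  have hpt : ∀ᵐ x : ℝ, ‖Gfun σ vp vs x‖ ≤ ‖(K • fun y : ℝ => ‖vs y‖) x‖ := by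
    filter_upwards [hs_ae, hp_ae] with x hsx hpx
    have := Gfun_pointwise σ hσ vp vs x hMφ0 hpx hsx
    simp only [Pi.smul_apply, smul_eq_mul, Real.norm_eq_abs]
    rw [_root_.abs_of_nonneg (by positivity)]
    calc ‖Gfun σ vp vs x‖
        ≤ C0 * (Mφ + Ms) ^ (2*σ-1) * Ms * ‖vs x‖ := this
      _ = K * ‖vs x‖ := by rw [hK]
  have step1 : eLpNorm (Gfun σ vp vs) 2 volume
      ≤ eLpNorm (K • fun y : ℝ => ‖vs y‖) 2 volume :=
    eLpNorm_mono_ae hpt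
  have step2 : eLpNorm (K • fun y : ℝ => ‖vs y‖) 2 volume
      = ENNReal.ofReal K * eLpNorm vs 2 volume := by
    rw [eLpNorm_const_smul, eLpNorm_norm]
    congr 1
    rw [← ofReal_norm, Real.norm_eq_abs, _root_.abs_of_nonneg hKnn]
  -- real-side estimate on K
  have hsplit : (Mφ + Ms) ^ (2*σ-1) ≤ 2 ^ (2*σ-1) * (Ms ^ (2*σ-1) + Mφ ^ (2*σ-1)) := by
    have hq : (0:ℝ) ≤ 2*σ-1 := by linarith
    have h1 : Mφ + Ms ≤ 2 * max Mφ Ms := by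
      rcases le_total Mφ Ms with h | h
      · rw [max_eq_right h]; linarith
      · rw [max_eq_left h]; linarith
    have h2 : (Mφ + Ms) ^ (2*σ-1) ≤ (2 * max Mφ Ms) ^ (2*σ-1) :=
      Real.rpow_le_rpow (by positivity) h1 hq
    have h3 : (2 * max Mφ Ms) ^ (2*σ-1)
        = 2 ^ (2*σ-1) * (max Mφ Ms) ^ (2*σ-1) :=
      Real.mul_rpow (by norm_num) (le_max_of_le_left hMφ0)
    have h4 : (max Mφ Ms) ^ (2*σ-1) ≤ Ms ^ (2*σ-1) + Mφ ^ (2*σ-1) := by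
      rcases le_total Mφ Ms with h | h
      · rw [max_eq_right h]
        have := Real.rpow_nonneg hMφ0 (2*σ-1); linarith
      · rw [max_eq_left h]
        have := Real.rpow_nonneg hMs0 (2*σ-1); linarith
    calc (Mφ + Ms) ^ (2*σ-1) ≤ 2 ^ (2*σ-1) * (max Mφ Ms) ^ (2*σ-1) := h3 ▸ h2
      _ ≤ 2 ^ (2*σ-1) * (Ms ^ (2*σ-1) + Mφ ^ (2*σ-1)) := by
          apply mul_le_mul_of_nonneg_left h4; positivity
  have hKle : K ≤ (C0 * 2 ^ (2*σ-1)) * (Ms ^ (2*σ) + Mφ ^ (2*σ-1) * Ms) := by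
    have h1 : K ≤ C0 * (2 ^ (2*σ-1) * (Ms ^ (2*σ-1) + Mφ ^ (2*σ-1))) * Ms := by
      rw [hK]
      apply mul_le_mul_of_nonneg_right _ hMs0
      exact mul_le_mul_of_nonneg_left hsplit hC0pos.le
    have h2 : Ms ^ (2*σ-1) * Ms = Ms ^ (2*σ) := by
      have := rpow_mul_self_aux hMs0 (r := 2*σ-1) (by linarith)
      rw [this]; ring_nf
    calc K ≤ C0 * (2 ^ (2*σ-1) * (Ms ^ (2*σ-1) + Mφ ^ (2*σ-1))) * Ms := h1
      _ = (C0 * 2 ^ (2*σ-1)) * (Ms ^ (2*σ-1) * Ms + Mφ ^ (2*σ-1) * Ms) := by ring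
      _ = (C0 * 2 ^ (2*σ-1)) * (Ms ^ (2*σ) + Mφ ^ (2*σ-1) * Ms) := by rw [h2]
  -- ENNReal side
  have hEMs_eq : EMs = ENNReal.ofReal Ms := (ENNReal.ofReal_toReal hEMs_ne).symm
  have hEMφ_eq : EMφ = ENNReal.ofReal Mφ := (ENNReal.ofReal_toReal hEMφ_ne).symm
  have hofK : ENNReal.ofReal K
      ≤ ENNReal.ofReal (C0 * 2 ^ (2*σ-1)) * (EMs ^ (2*σ) + EMφ ^ (2*σ-1) * EMs) := by
    calc ENNReal.ofReal K
        ≤ ENNReal.ofReal ((C0 * 2 ^ (2*σ-1)) * (Ms ^ (2*σ) + Mφ ^ (2*σ-1) * Ms)) :=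
          ENNReal.ofReal_le_ofReal hKle
      _ = ENNReal.ofReal (C0 * 2 ^ (2*σ-1)) * (EMs ^ (2*σ) + EMφ ^ (2*σ-1) * EMs) := by
          rw [ENNReal.ofReal_mul (by positivity)]
          congr 1
          rw [ENNReal.ofReal_add (by positivity) (by positivity),
            ENNReal.ofReal_mul (by positivity), hEMs_eq, hEMφ_eq,
            ← ENNReal.ofReal_rpow_of_nonneg hMs0 (by linarith),
            ← ENNReal.ofReal_rpow_of_nonneg hMφ0 (by linarith)]
  calc eLpNorm (Gfun σ vp vs) 2 volume
      ≤ ENNReal.ofReal K * eLpNorm vs 2 volume := step2 ▸ step1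
    _ ≤ ENNReal.ofReal (C0 * 2 ^ (2*σ-1))
          * (EMs ^ (2*σ) + EMφ ^ (2*σ-1) * EMs) * eLpNorm vs 2 volume :=
        mul_le_mul_left hofK _
end

section
/- Let σ ≥ 1 be a real number and K ≥ 0. There exists a constant C > 0, depending only on σ and K, such that for all complex numbers z_p, z₁, z₂ with |z_p| ≤ K and all θ ∈ [0,1], writing z_{jθ} = z_p + θ·z_j for j = 1,2: | conj(z₁) ( |z_{1θ}|^{2σ−2} z_{1θ}² − |z_p|^{2σ−2} z_p² ) − conj(z₂) ( |z_{2θ}|^{2σ−2} z_{2θ}² − |z_p|^{2σ−2} z_p² ) | ≤ C ( |z₁|^{2σ} + |z₁| + |z₂|^{2σ} + |z₂| ) |z₁ − z₂|. -/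
set_option maxHeartbeats 1000000


open Complex

lemma rpow_succ' {x : ℝ} (hx : 0 ≤ x) {a : ℝ} (ha : a ≠ 0) : x ^ a = x ^ (a - 1) * x := by
  nth_rewrite 3 [← Real.rpow_one x]
  rw [← Real.rpow_add' hx (by simpa using ha)]
  norm_num

lemma lemA {a x y : ℝ} (ha : 0 ≤ a) (hx : 0 ≤ x) (hxy : x ≤ y) :
    y ^ a - x ^ a ≤ (a + 1) * y ^ (a - 1) * (y - x) := by
  have hy : 0 ≤ y := hx.trans hxy
  rcases le_or_gt a 1 with h1 | h1
  · rcases eq_or_lt_of_le ha with rfl | hapos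
    · simp only [Real.rpow_zero]
      have : (0:ℝ) ≤ y ^ ((0:ℝ) - 1) := Real.rpow_nonneg hy _
      nlinarith [sub_nonneg.2 hxy]
    · -- 0 < a ≤ 1 : y^a - x^a ≤ y^{a-1}(y-x)
      have key : x * y ^ (a - 1) ≤ x ^ a := by
        rcases eq_or_lt_of_le hx with rfl | hxpos
        · simp [Real.zero_rpow (ne_of_gt hapos)]
        · have h2 : y ^ (a-1) ≤ x ^ (a-1) :=
            Real.rpow_le_rpow_of_nonpos hxpos hxy (by linarith)
          calc x * y ^ (a-1) ≤ x * x ^ (a-1) := by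
                exact mul_le_mul_of_nonneg_left h2 hx
            _ = x ^ a := by rw [rpow_succ' hx hapos.ne']; ring
      have hya : y ^ a = y ^ (a-1) * y := rpow_succ' hy hapos.ne' 
      have hnn : 0 ≤ y ^ (a-1) * (y - x) := by
        have := Real.rpow_nonneg hy (a-1); nlinarith
      nlinarith [Real.rpow_nonneg hy (a-1)]
  · -- a > 1 : MVT
    have hd : ∀ t ∈ Set.Icc x y, HasDerivWithinAt (fun s : ℝ => s ^ a)
        (a * t ^ (a - 1)) (Set.Icc x y) t := fun t _ =>
      (Real.hasDerivAt_rpow_const (Or.inr h1.le)).hasDerivWithinAt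
    have hbound : ∀ t ∈ Set.Icc x y, ‖a * t ^ (a-1)‖ ≤ a * y ^ (a-1) := by
      intro t ht
      rw [Real.norm_eq_abs, _root_.abs_of_nonneg (mul_nonneg (by linarith) (Real.rpow_nonneg (hx.trans ht.1) _))]
      exact mul_le_mul_of_nonneg_left
        (Real.rpow_le_rpow (hx.trans ht.1) ht.2 (by linarith)) ha
    have := (convex_Icc x y).norm_image_sub_le_of_norm_hasDerivWithin_le hd hbound
      (Set.left_mem_Icc.2 hxy) (Set.right_mem_Icc.2 hxy)
    rw [Real.norm_eq_abs, Real.norm_eq_abs] at this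
    have h2 : y ^ a - x ^ a ≤ a * y ^ (a-1) * |y - x| := (le_abs_self _).trans this
    rw [_root_.abs_of_nonneg (by linarith)] at h2
    have : 0 ≤ y ^ (a-1) * (y-x) := by
      have := Real.rpow_nonneg hy (a-1); nlinarith
    nlinarith

lemma keyAux {a : ℝ} (ha : 0 ≤ a) (w v : ℂ) (hvw : norm v ≤ norm w) :
    norm ((↑(norm w ^ a) : ℂ) * w ^ 2 - (↑(norm v ^ a) : ℂ) * v ^ 2)
      ≤ (a + 3) * norm w ^ (a + 1) * norm (w - v) := by
  set W := norm w with hW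
  set V := norm v with hV
  have hW0 : 0 ≤ W := norm_nonneg w
  have hV0 : 0 ≤ V := norm_nonneg v
  have hsplit : (↑(W ^ a) : ℂ) * w ^ 2 - (↑(V ^ a) : ℂ) * v ^ 2
      = (↑(W ^ a) : ℂ) * (w ^ 2 - v ^ 2) + (↑(W ^ a) - ↑(V ^ a)) * v ^ 2 := by ring
  rw [hsplit]
  have t1 : norm ((↑(W ^ a) : ℂ) * (w ^ 2 - v ^ 2))
      ≤ 2 * W ^ (a + 1) * norm (w - v) := by
    rw [norm_mul]
    have h1 : norm ((↑(W ^ a) : ℂ)) = W ^ a := by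
      rw [Complex.norm_real, Real.norm_eq_abs, _root_.abs_of_nonneg (Real.rpow_nonneg hW0 a)]
    have h2 : w ^ 2 - v ^ 2 = (w + v) * (w - v) := by ring
    rw [h1, h2, norm_mul]
    have h3 : norm (w + v) ≤ 2 * W := by
      calc norm (w + v) ≤ W + V := norm_add_le w v
        _ ≤ 2 * W := by linarith
    have h4 : W ^ a * W = W ^ (a + 1) := by
      rw [Real.rpow_add' hW0 (by positivity), Real.rpow_one]
    calc W ^ a * (norm (w + v) * norm (w - v))
        ≤ W ^ a * (2 * W * norm (w - v)) := by
          exact mul_le_mul_of_nonneg_left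
            (mul_le_mul_of_nonneg_right h3 (norm_nonneg _))
            (Real.rpow_nonneg hW0 a)
      _ = 2 * (W ^ a * W) * norm (w - v) := by ring
      _ = 2 * W ^ (a + 1) * norm (w - v) := by rw [h4]
  have t2 : norm (((↑(W ^ a) : ℂ) - ↑(V ^ a)) * v ^ 2)
      ≤ (a + 1) * W ^ (a + 1) * norm (w - v) := by
    rw [norm_mul]
    have h1 : norm ((↑(W ^ a) : ℂ) - ↑(V ^ a)) = W ^ a - V ^ a := by
      rw [← Complex.ofReal_sub, Complex.norm_real, Real.norm_eq_abs,
        _root_.abs_of_nonneg (sub_nonneg.2 (Real.rpow_le_rpow hV0 hvw ha))]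
    have h2 : W ^ a - V ^ a ≤ (a + 1) * W ^ (a - 1) * (W - V) := lemA ha hV0 hvw
    have h3 : W - V ≤ norm (w - v) :=
      le_trans (le_abs_self _) (abs_norm_sub_norm_le w v)
    have h4 : norm (v ^ 2) ≤ W ^ 2 := by
      rw [norm_pow]
      exact pow_le_pow_left₀ hV0 hvw 2
    have h5 : W ^ (a - 1) * W ^ 2 = W ^ (a + 1) := by
      rw [← Real.rpow_natCast W 2, ← Real.rpow_add' hW0 (by intro h; push_cast at h; linarith)]
      congr 1; push_cast; ring
    calc norm ((↑(W ^ a) : ℂ) - ↑(V ^ a)) * norm (v ^ 2)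
        ≤ ((a + 1) * W ^ (a - 1) * norm (w - v)) * W ^ 2 := by
          apply mul_le_mul
          · rw [h1]
            calc W ^ a - V ^ a ≤ (a + 1) * W ^ (a - 1) * (W - V) := h2
              _ ≤ (a + 1) * W ^ (a - 1) * norm (w - v) := by
                  apply mul_le_mul_of_nonneg_left h3
                  exact mul_nonneg (by linarith) (Real.rpow_nonneg hW0 _)
          · exact h4
          · exact norm_nonneg _
          · exact mul_nonneg (mul_nonneg (by linarith) (Real.rpow_nonneg hW0 _))
              (norm_nonneg _)
      _ = (a + 1) * (W ^ (a - 1) * W ^ 2) * norm (w - v) := by ring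
      _ = (a + 1) * W ^ (a + 1) * norm (w - v) := by rw [h5]
  calc norm _ ≤ _ + _ := norm_add_le _ _
    _ ≤ 2 * W ^ (a + 1) * norm (w - v)
        + (a + 1) * W ^ (a + 1) * norm (w - v) := add_le_add t1 t2
    _ = (a + 3) * W ^ (a + 1) * norm (w - v) := by ring

lemma keyB {a : ℝ} (ha : 0 ≤ a) (w v : ℂ) :
    norm ((↑(norm w ^ a) : ℂ) * w ^ 2 - (↑(norm v ^ a) : ℂ) * v ^ 2)
      ≤ (a + 3) * max (norm w) (norm v) ^ (a + 1) * norm (w - v) := by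
  rcases le_total (norm v) (norm w) with h | h
  · rw [max_eq_left h]; exact keyAux ha w v h
  · rw [max_eq_right h]
    calc norm _ = norm ((↑(norm v ^ a) : ℂ) * v ^ 2
        - (↑(norm w ^ a) : ℂ) * w ^ 2) := norm_sub_rev _ _
      _ ≤ (a + 3) * norm v ^ (a + 1) * norm (v - w) := keyAux ha v w h
      _ = (a + 3) * norm v ^ (a + 1) * norm (w - v) := by
          rw [norm_sub_rev]
lemma rpow_sum_le {p K t : ℝ} (hp : 0 ≤ p) (hK : 0 ≤ K) (ht : 0 ≤ t) :
    (K + t) ^ p ≤ 2 ^ p * (K ^ p + t ^ p) := by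
  have hm : 0 ≤ max K t := le_trans hK (le_max_left _ _)
  have h1 : K + t ≤ 2 * max K t := by
    rcases le_total K t with h | h
    · rw [max_eq_right h]; linarith
    · rw [max_eq_left h]; linarith
  calc (K + t) ^ p ≤ (2 * max K t) ^ p := Real.rpow_le_rpow (by positivity) h1 hp
    _ = 2 ^ p * (max K t) ^ p := Real.mul_rpow (by norm_num) hm
    _ ≤ 2 ^ p * (K ^ p + t ^ p) := by
        apply mul_le_mul_of_nonneg_left _ (Real.rpow_nonneg (by norm_num) p)
        rcases le_total K t with h | h
        · rw [max_eq_right h]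
          exact le_add_of_nonneg_left (Real.rpow_nonneg hK p)
        · rw [max_eq_left h]
          exact le_add_of_nonneg_right (Real.rpow_nonneg ht p)

/-- Lipschitz-type estimate for
`z ↦ conj(z) (|z_p + θ z|^{2σ−2}(z_p + θ z)² − |z_p|^{2σ−2} z_p²)` with bounded `z_p`. -/
theorem conj_mul_segment_difference_lipschitz (σ K : ℝ) (hσ : 1 ≤ σ) (hK : 0 ≤ K) :
    ∃ C > 0, ∀ (zp z₁ z₂ : ℂ), norm zp ≤ K → ∀ θ ∈ Set.Icc (0:ℝ) 1,
      norm
        ((starRingEnd ℂ) z₁ *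
            ((↑(norm (zp + ↑θ * z₁) ^ (2*σ-2)) : ℂ) * (zp + ↑θ * z₁)^2
              - (↑(norm zp ^ (2*σ-2)) : ℂ) * zp^2)
          - (starRingEnd ℂ) z₂ *
            ((↑(norm (zp + ↑θ * z₂) ^ (2*σ-2)) : ℂ) * (zp + ↑θ * z₂)^2
              - (↑(norm zp ^ (2*σ-2)) : ℂ) * zp^2))
        ≤ C * (norm z₁ ^ (2*σ) + norm z₁
            + norm z₂ ^ (2*σ) + norm z₂) * norm (z₁ - z₂) := by
  have ha : (0:ℝ) ≤ 2*σ-2 := by linarith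
  have hp : (0:ℝ) ≤ 2*σ-2+1 := by linarith
  set C2 : ℝ := (2*σ-2+3) * 2 ^ (2*σ-2+1) * (K ^ (2*σ-2+1) + 1) with hC2def
  have hC2 : 0 < C2 := by
    apply mul_pos (mul_pos (by linarith) (Real.rpow_pos_of_pos (by norm_num) _))
    have := Real.rpow_nonneg hK (2*σ-2+1); linarith
  refine ⟨2 * C2, by linarith, ?_⟩
  intro zp z₁ z₂ hzp θ hθ
  obtain ⟨hθ0, hθ1⟩ := hθ
  set w₁ := zp + (↑θ : ℂ) * z₁ with hw₁
  set w₂ := zp + (↑θ : ℂ) * z₂ with hw₂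
  set r₁ := norm z₁ with hr₁
  set r₂ := norm z₂ with hr₂
  set d := norm (z₁ - z₂) with hd
  have hr₁0 : 0 ≤ r₁ := norm_nonneg _
  have hr₂0 : 0 ≤ r₂ := norm_nonneg _
  have hd0 : 0 ≤ d := norm_nonneg _
  set m := max r₁ r₂ with hm
  have hm0 : 0 ≤ m := le_trans hr₁0 (le_max_left _ _)
  set F₁ : ℂ := (↑(norm w₁ ^ (2*σ-2)) : ℂ) * w₁^2 with hF₁
  set F₂ : ℂ := (↑(norm w₂ ^ (2*σ-2)) : ℂ) * w₂^2 with hF₂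
  set Fp : ℂ := (↑(norm zp ^ (2*σ-2)) : ℂ) * zp^2 with hFp
  have hsplit : (starRingEnd ℂ) z₁ * (F₁ - Fp) - (starRingEnd ℂ) z₂ * (F₂ - Fp)
      = (starRingEnd ℂ) (z₁ - z₂) * (F₁ - Fp) + (starRingEnd ℂ) z₂ * (F₁ - F₂) := by
    rw [map_sub]; ring
  -- absolute value bounds of the differences of zs
  have habsθ : norm ((↑θ:ℂ)) ≤ 1 := by
    rw [Complex.norm_real, Real.norm_eq_abs, _root_.abs_of_nonneg hθ0]; exact hθ1
  have hw₁zp : norm (w₁ - zp) ≤ r₁ := by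
    have : w₁ - zp = (↑θ:ℂ) * z₁ := by rw [hw₁]; ring
    rw [this, norm_mul]
    exact mul_le_of_le_one_left hr₁0 habsθ
  have hw₁w₂ : norm (w₁ - w₂) ≤ d := by
    have : w₁ - w₂ = (↑θ:ℂ) * (z₁ - z₂) := by rw [hw₁, hw₂]; ring
    rw [this, norm_mul]
    exact mul_le_of_le_one_left hd0 habsθ
  have habsw₁ : norm w₁ ≤ K + r₁ := by
    calc norm w₁ ≤ norm zp + norm ((↑θ:ℂ) * z₁) := norm_add_le _ _
      _ ≤ K + r₁ := by
          rw [norm_mul]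
          exact add_le_add hzp (mul_le_of_le_one_left hr₁0 habsθ)
  have habsw₂ : norm w₂ ≤ K + r₂ := by
    calc norm w₂ ≤ norm zp + norm ((↑θ:ℂ) * z₂) := norm_add_le _ _
      _ ≤ K + r₂ := by
          rw [norm_mul]
          exact add_le_add hzp (mul_le_of_le_one_left hr₂0 habsθ)
  -- Bound on F₁ - Fp
  have hB1 : norm (F₁ - Fp) ≤ (2*σ-2+3) * (K + r₁) ^ (2*σ-2+1) * r₁ := by
    calc norm (F₁ - Fp)
        ≤ (2*σ-2+3) * max (norm w₁) (norm zp) ^ (2*σ-2+1)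
            * norm (w₁ - zp) := keyB ha w₁ zp
      _ ≤ (2*σ-2+3) * (K + r₁) ^ (2*σ-2+1) * r₁ := by
          apply mul_le_mul
          · apply mul_le_mul_of_nonneg_left _ (by linarith)
            apply Real.rpow_le_rpow (le_trans (norm_nonneg _) (le_max_left _ _)) _ hp
            exact max_le habsw₁ (by linarith)
          · exact hw₁zp
          · exact norm_nonneg _
          · exact mul_nonneg (by linarith) (Real.rpow_nonneg (by linarith) _)
  -- Bound on F₁ - F₂
  have hB2 : norm (F₁ - F₂) ≤ (2*σ-2+3) * (K + m) ^ (2*σ-2+1) * d := by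
    calc norm (F₁ - F₂)
        ≤ (2*σ-2+3) * max (norm w₁) (norm w₂) ^ (2*σ-2+1)
            * norm (w₁ - w₂) := keyB ha w₁ w₂
      _ ≤ (2*σ-2+3) * (K + m) ^ (2*σ-2+1) * d := by
          apply mul_le_mul
          · apply mul_le_mul_of_nonneg_left _ (by linarith)
            apply Real.rpow_le_rpow (le_trans (norm_nonneg _) (le_max_left _ _)) _ hp
            apply max_le
            · exact habsw₁.trans (by simp [hm, le_max_left])
            · exact habsw₂.trans (by simp [hm, le_max_right])
          · exact hw₁w₂
          · exact norm_nonneg _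
          · exact mul_nonneg (by linarith) (Real.rpow_nonneg (by linarith) _)
  -- combine
  rw [hsplit]
  have tri : norm ((starRingEnd ℂ) (z₁ - z₂) * (F₁ - Fp)
        + (starRingEnd ℂ) z₂ * (F₁ - F₂))
      ≤ d * norm (F₁ - Fp) + r₂ * norm (F₁ - F₂) := by
    calc norm _ ≤ norm ((starRingEnd ℂ) (z₁ - z₂) * (F₁ - Fp))
          + norm ((starRingEnd ℂ) z₂ * (F₁ - F₂)) := norm_add_le _ _
      _ = d * norm (F₁ - Fp) + r₂ * norm (F₁ - F₂) := by
          rw [norm_mul, norm_mul, Complex.norm_conj, Complex.norm_conj]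
  apply tri.trans
  -- real arithmetic from here
  have key1 : (2*σ-2+3) * (K + r₁) ^ (2*σ-2+1) * r₁ ≤ C2 * (r₁ ^ (2*σ) + r₁) := by
    have h1 : (K + r₁) ^ (2*σ-2+1) ≤ 2 ^ (2*σ-2+1) * (K ^ (2*σ-2+1) + r₁ ^ (2*σ-2+1)) :=
      rpow_sum_le hp hK hr₁0
    have h2 : r₁ ^ (2*σ-2+1) * r₁ = r₁ ^ (2*σ) := by
      rw [show (2*σ-2+1 : ℝ) = 2*σ-1 by ring,
        rpow_succ' hr₁0 (show 2*σ ≠ 0 by intro h; linarith)]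
    have h3 : (0:ℝ) ≤ 2 ^ (2*σ-2+1) := Real.rpow_nonneg (by norm_num) _
    have h4 : (0:ℝ) ≤ K ^ (2*σ-2+1) := Real.rpow_nonneg hK _
    have h5 : (0:ℝ) ≤ r₁ ^ (2*σ-2+1) := Real.rpow_nonneg hr₁0 _
    have h6 : (0:ℝ) ≤ r₁ ^ (2*σ) := Real.rpow_nonneg hr₁0 _
    calc (2*σ-2+3) * (K + r₁) ^ (2*σ-2+1) * r₁
        ≤ (2*σ-2+3) * (2 ^ (2*σ-2+1) * (K ^ (2*σ-2+1) + r₁ ^ (2*σ-2+1))) * r₁ := by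
          apply mul_le_mul_of_nonneg_right _ hr₁0
          exact mul_le_mul_of_nonneg_left h1 (by linarith)
      _ = (2*σ-2+3) * 2 ^ (2*σ-2+1) * (K ^ (2*σ-2+1) * r₁ + r₁ ^ (2*σ-2+1) * r₁) := by ring
      _ = (2*σ-2+3) * 2 ^ (2*σ-2+1) * (K ^ (2*σ-2+1) * r₁ + r₁ ^ (2*σ)) := by rw [h2]
      _ ≤ (2*σ-2+3) * 2 ^ (2*σ-2+1) * ((K ^ (2*σ-2+1) + 1) * (r₁ ^ (2*σ) + r₁)) := by
          apply mul_le_mul_of_nonneg_left _ (mul_nonneg (by linarith) h3)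
          nlinarith
      _ = C2 * (r₁ ^ (2*σ) + r₁) := by rw [hC2def]; ring
  have key2 : (2*σ-2+3) * (K + m) ^ (2*σ-2+1) * r₂
      ≤ C2 * (r₁ ^ (2*σ) + r₂ ^ (2*σ) + r₂) := by
    have h1 : (K + m) ^ (2*σ-2+1) ≤ 2 ^ (2*σ-2+1) * (K ^ (2*σ-2+1) + m ^ (2*σ-2+1)) :=
      rpow_sum_le hp hK hm0
    have h2 : m ^ (2*σ-2+1) * r₂ ≤ r₁ ^ (2*σ) + r₂ ^ (2*σ) := by
      have hmm : m ^ (2*σ-2+1) * r₂ ≤ m ^ (2*σ) := by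
        rw [rpow_succ' hm0 (show 2*σ ≠ 0 by intro h; linarith)]
        have e : 2*σ - 1 = 2*σ-2+1 := by ring
        rw [e]
        exact mul_le_mul_of_nonneg_left (le_max_right _ _) (Real.rpow_nonneg hm0 _)
      apply hmm.trans
      rcases le_total r₁ r₂ with h | h
      · rw [hm, max_eq_right h]
        exact le_add_of_nonneg_left (Real.rpow_nonneg hr₁0 _)
      · rw [hm, max_eq_left h]
        exact le_add_of_nonneg_right (Real.rpow_nonneg hr₂0 _)
    have h3 : (0:ℝ) ≤ 2 ^ (2*σ-2+1) := Real.rpow_nonneg (by norm_num) _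
    have h4 : (0:ℝ) ≤ K ^ (2*σ-2+1) := Real.rpow_nonneg hK _
    have h6 : (0:ℝ) ≤ r₁ ^ (2*σ) := Real.rpow_nonneg hr₁0 _
    have h7 : (0:ℝ) ≤ r₂ ^ (2*σ) := Real.rpow_nonneg hr₂0 _
    calc (2*σ-2+3) * (K + m) ^ (2*σ-2+1) * r₂
        ≤ (2*σ-2+3) * (2 ^ (2*σ-2+1) * (K ^ (2*σ-2+1) + m ^ (2*σ-2+1))) * r₂ := by
          apply mul_le_mul_of_nonneg_right _ hr₂0
          exact mul_le_mul_of_nonneg_left h1 (by linarith)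
      _ = (2*σ-2+3) * 2 ^ (2*σ-2+1) * (K ^ (2*σ-2+1) * r₂ + m ^ (2*σ-2+1) * r₂) := by ring
      _ ≤ (2*σ-2+3) * 2 ^ (2*σ-2+1)
            * ((K ^ (2*σ-2+1) + 1) * (r₁ ^ (2*σ) + r₂ ^ (2*σ) + r₂)) := by
          apply mul_le_mul_of_nonneg_left _ (mul_nonneg (by linarith) h3)
          nlinarith
      _ = C2 * (r₁ ^ (2*σ) + r₂ ^ (2*σ) + r₂) := by rw [hC2def]; ring
  have final : d * norm (F₁ - Fp) + r₂ * norm (F₁ - F₂)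
      ≤ 2 * C2 * (r₁ ^ (2*σ) + r₁ + r₂ ^ (2*σ) + r₂) * d := by
    have s1 : d * norm (F₁ - Fp) ≤ d * (C2 * (r₁ ^ (2*σ) + r₁)) :=
      mul_le_mul_of_nonneg_left (hB1.trans key1) hd0
    have s2 : r₂ * norm (F₁ - F₂) ≤ C2 * (r₁ ^ (2*σ) + r₂ ^ (2*σ) + r₂) * d := by
      calc r₂ * norm (F₁ - F₂)
          ≤ r₂ * ((2*σ-2+3) * (K + m) ^ (2*σ-2+1) * d) :=
            mul_le_mul_of_nonneg_left hB2 hr₂0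
        _ = ((2*σ-2+3) * (K + m) ^ (2*σ-2+1) * r₂) * d := by ring
        _ ≤ C2 * (r₁ ^ (2*σ) + r₂ ^ (2*σ) + r₂) * d :=
            mul_le_mul_of_nonneg_right key2 hd0
    have h6 : (0:ℝ) ≤ r₁ ^ (2*σ) := Real.rpow_nonneg hr₁0 _
    have h7 : (0:ℝ) ≤ r₂ ^ (2*σ) := Real.rpow_nonneg hr₂0 _
    nlinarith [mul_nonneg hC2.le hd0, mul_nonneg (mul_nonneg hC2.le hd0) hr₁0,
      mul_nonneg (mul_nonneg hC2.le hd0) h6, mul_nonneg (mul_nonneg hC2.le hd0) h7,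
      mul_nonneg (mul_nonneg hC2.le hd0) hr₂0]
  exact final
end
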